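/- arXiv:1311.5769 — 10 statements merged into one kernel-verified Lean document; each statement's English description precedes it below -/
import Mathlib

section
/- For natural numbers n and k with k ≤ n and n ≡ k (mod 2), the number of sequences s : Fin n → ℤ with every value s i ∈ {1, −1}, with every partial sum ∑_{j<i} s j ≥ 0 (for all i ≤ n), and with total sum ∑_{j<n} s j = k, equals ((k+1)/(n+1))·C(n+1, (n−k)/2), where C denotes the binomial coefficient. -/
open Finset

def Q (n : ℕ) (c : ℤ) : Finset (Fin n → ℤ) :=
  (Fintype.piFinset (fun _ : Fin n => ({1, -1} : Finset ℤ))).filter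
    (fun s : Fin n → ℤ =>
      (∀ i ≤ n, 0 ≤ ∑ j ∈ Finset.univ.filter (fun j : Fin n => (j : ℕ) < i), s j) ∧
      (∑ j, s j) = c)

lemma mem_Q {n : ℕ} {c : ℤ} {s : Fin n → ℤ} :
    s ∈ Q n c ↔ (∀ i, s i = 1 ∨ s i = -1) ∧
      (∀ i ≤ n, 0 ≤ ∑ j ∈ Finset.univ.filter (fun j : Fin n => (j : ℕ) < i), s j) ∧
      (∑ j, s j) = c := by
  simp [Q, Fintype.mem_piFinset]

lemma filter_lt_self (n : ℕ) :
    (Finset.univ.filter (fun j : Fin n => (j : ℕ) < n)) = Finset.univ := by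
  simp [Finset.filter_true_of_mem, Fin.is_lt]

lemma psum_castSucc (n i : ℕ) (hi : i ≤ n) (s : Fin (n+1) → ℤ) :
    ∑ j ∈ Finset.univ.filter (fun j : Fin (n+1) => (j : ℕ) < i), s j
    = ∑ j ∈ Finset.univ.filter (fun j : Fin n => (j : ℕ) < i), s j.castSucc := by
  rw [Finset.sum_filter, Finset.sum_filter, Fin.sum_univ_castSucc]
  simp [Nat.not_lt.mpr hi]

lemma Q_neg {n : ℕ} {c : ℤ} (hc : c < 0) : Q n c = ∅ := by
  ext s
  simp only [Finset.notMem_empty, iff_false]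
  intro hs
  obtain ⟨_, h2, h3⟩ := mem_Q.mp hs
  have := h2 n le_rfl
  rw [filter_lt_self, h3] at this
  omega

lemma Q_big {n : ℕ} {c : ℤ} (hc : (n : ℤ) < c) : Q n c = ∅ := by
  ext s
  simp only [Finset.notMem_empty, iff_false]
  intro hs
  obtain ⟨h1, _, h3⟩ := mem_Q.mp hs
  have : (∑ j, s j) ≤ ∑ _j : Fin n, (1 : ℤ) := by
    apply Finset.sum_le_sum
    intro i _
    rcases h1 i with h | h <;> omega
  simp at this
  omega

lemma Q_rec (n : ℕ) (c : ℤ) (hc : 0 ≤ c) :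
    (Q (n+1) c).card = (Q n (c-1)).card + (Q n (c+1)).card := by
  rw [← Finset.card_union_of_disjoint (by
    rw [Finset.disjoint_left]
    intro s hs hs'
    have := (mem_Q.mp hs).2.2
    have := (mem_Q.mp hs').2.2
    omega)]
  refine Finset.card_bij' (fun s _ => Fin.init s)
    (fun t _ => Fin.snoc t (c - ∑ j, t j)) ?hi ?hj ?li ?ri
  case hi =>
    intro s hs
    obtain ⟨h1, h2, h3⟩ := mem_Q.mp hs
    rw [Fin.sum_univ_castSucc] at h3
    have hmem : ∀ c', (∑ j : Fin n, s j.castSucc) = c' → Fin.init s ∈ Q n c' := by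
      intro c' hc'
      refine mem_Q.mpr ⟨fun i => h1 _, fun i hi => ?_, hc'⟩
      have := h2 i (le_trans hi (Nat.le_succ n))
      rwa [psum_castSucc n i hi s] at this
    rcases h1 (Fin.last n) with h | h
    · exact Finset.mem_union.mpr (Or.inl (hmem _ (by omega)))
    · exact Finset.mem_union.mpr (Or.inr (hmem _ (by omega)))
  case hj =>
    intro t ht
    have key : ∀ c', t ∈ Q n c' → (c - c' = 1 ∨ c - c' = -1) →
        Fin.snoc t (c - ∑ j, t j) ∈ Q (n+1) c := by
      intro c' hQ hdiff
      obtain ⟨h1, h2, h3⟩ := mem_Q.mp hQ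
      rw [h3]
      refine mem_Q.mpr ⟨?_, ?_, ?_⟩
      · intro i
        refine Fin.lastCases ?_ ?_ i
        · rw [Fin.snoc_last]; omega
        · intro j; rw [Fin.snoc_castSucc]; exact h1 j
      · intro i hi
        rcases Nat.lt_or_ge i (n+1) with h | h
        · have hi' : i ≤ n := by omega
          rw [psum_castSucc n i hi']
          have : ∀ j : Fin n, (Fin.snoc t (c - c') : Fin (n+1) → ℤ) j.castSucc = t j := by
            intro j; rw [Fin.snoc_castSucc]
          rw [Finset.sum_congr rfl (fun j _ => this j)]
          exact h2 i hi'
        · have : i = n+1 := by omega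
          subst this
          rw [filter_lt_self, Fin.sum_univ_castSucc]
          simp only [Fin.snoc_last, Fin.snoc_castSucc]
          rw [h3]
          omega
      · rw [Fin.sum_univ_castSucc]
        simp only [Fin.snoc_last, Fin.snoc_castSucc]
        rw [h3]; ring
    rcases Finset.mem_union.mp ht with h | h
    · have := (mem_Q.mp h).2.2
      exact key _ h (by omega)
    · have := (mem_Q.mp h).2.2
      exact key _ h (by omega)
  case li =>
    intro s hs
    have h3 := (mem_Q.mp hs).2.2
    have : c - ∑ j, Fin.init s j = s (Fin.last n) := by
      rw [Fin.sum_univ_castSucc] at h3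
      simp only [Fin.init]
      omega
    rw [this, Fin.snoc_init_self]
  case ri =>
    intro t ht
    simp [Fin.init_snoc]

lemma Q_card (n k : ℕ) (hkn : k ≤ n) (hpar : n % 2 = k % 2) :
    ((Q n (k : ℤ)).card : ℚ)
      = ((k : ℚ) + 1) / ((n : ℚ) + 1) * (Nat.choose (n + 1) ((n - k) / 2) : ℚ) := by
  induction n generalizing k with
  | zero =>
    interval_cases k
    have h : Q 0 ((0:ℕ):ℤ) = {![]} := by
      ext s
      simp [mem_Q]
      exact Subsingleton.elim s ![]
    rw [h]
    simp
  | succ n ih =>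
    rcases Nat.eq_zero_or_pos k with rfl | hk
    · -- k = 0, n odd
      obtain ⟨t, rfl⟩ : ∃ t, n = 2*t+1 := ⟨n/2, by omega⟩
      rw [show (((0:ℕ):ℤ)) = (0:ℤ) by norm_num, Q_rec _ _ le_rfl,
        Q_neg (by norm_num : (0:ℤ)-1 < 0),
        show (0:ℤ)+1 = ((1:ℕ):ℤ) by norm_num]
      have h1 := ih 1 (by omega) (by omega)
      rw [show (2*t+1-1)/2 = t from by omega] at h1
      have hfact : ((2*t+2+1 : ℕ) : ℚ) * (Nat.choose (2*t+2) t : ℚ)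
          = (Nat.choose (2*t+3) (t+1) : ℚ) * ((t:ℚ)+1) := by
        exact_mod_cast congrArg (fun x : ℕ => (x : ℚ)) (Nat.add_one_mul_choose_eq (2*t+2) t)
      rw [show (2*t+1+1-0)/2 = t+1 from by omega]
      simp only [Finset.card_empty, Nat.cast_zero, zero_add]
      rw [h1]
      push_cast at hfact ⊢
      have d1 : ((t:ℚ)*2 + 1 + 1) ≠ 0 := by positivity
      have d2 : ((t:ℚ)*2 + 1 + 1 + 1) ≠ 0 := by positivity
      field_simp
      ring_nf
      ring_nf at hfact
      nlinarith [hfact]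
    · rcases eq_or_lt_of_le hkn with rfl | hlt
      · -- k = n+1
        rw [Q_rec _ _ (by positivity),
          show ((n+1:ℕ):ℤ)+1 = ((n:ℕ):ℤ)+2 by push_cast; ring,
          Q_big (by omega : ((n:ℕ):ℤ) < ((n:ℕ):ℤ)+2),
          show ((n+1:ℕ):ℤ)-1 = ((n:ℕ):ℤ) by push_cast; ring]
        have h1 := ih n le_rfl rfl
        rw [show (n-n)/2 = 0 from by omega] at h1
        rw [show (n+1-(n+1))/2 = 0 from by omega]
        simp only [Finset.card_empty, Nat.add_zero, Nat.choose_zero_right] at h1 ⊢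
        rw [h1]
        push_cast
        have d1 : ((n:ℚ) + 1) ≠ 0 := by positivity
        have d2 : ((n:ℚ) + 1 + 1) ≠ 0 := by positivity
        field_simp
      · -- 1 ≤ k, k+1 ≤ n
        have hk1 : k + 1 ≤ n := by omega
        obtain ⟨j, rfl⟩ : ∃ j, n = 2*j + k + 1 := ⟨(n-k-1)/2, by omega⟩
        rw [Q_rec _ _ (by positivity),
          show ((k:ℕ):ℤ)-1 = ((k-1:ℕ):ℤ) by push_cast [hk]; ring,
          show ((k:ℕ):ℤ)+1 = ((k+1:ℕ):ℤ) by push_cast; ring]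
        have hA := ih (k-1) (by omega) (by omega)
        have hB := ih (k+1) (by omega) (by omega)
        rw [show (2*j+k+1-(k-1))/2 = j+1 from by omega] at hA
        rw [show (2*j+k+1-(k+1))/2 = j from by omega] at hB
        rw [show (2*j+k+1+1-k)/2 = j+1 from by omega]
        rw [Nat.cast_add, hA, hB]
        have h1 : (Nat.choose (2*j+k+1+1+1) (j+1) : ℚ)
            = (Nat.choose (2*j+k+1+1) j : ℚ) + (Nat.choose (2*j+k+1+1) (j+1) : ℚ) := by
          exact_mod_cast congrArg (fun x : ℕ => (x : ℚ)) (Nat.choose_succ_succ (2*j+k+1+1) j)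
        have h2 : (Nat.choose (2*j+k+2) (j+1) : ℚ) * ((j:ℚ)+1)
            = (Nat.choose (2*j+k+2) j : ℚ) * ((j:ℚ)+(k:ℚ)+2) := by
          have := Nat.choose_succ_right_eq (2*j+k+2) j
          have h3 : 2*j+k+2 - j = j+k+2 := by omega
          rw [h3] at this
          exact_mod_cast congrArg (fun x : ℕ => (x : ℚ)) this
        have d1 : ((2*j+k+1:ℚ) + 1) ≠ 0 := by positivity
        have d2 : ((2*j+k+1:ℚ) + 1 + 1) ≠ 0 := by positivity
        push_cast [show 1 ≤ k from hk] at h1 h2 ⊢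
        field_simp
        linear_combination (-((k:ℚ)+1)*((k:ℚ)+2*(j:ℚ)+2)) * h1 - 2 * h2

/-- Dyck-triangle paths from `(0,0)` to `(n,k)` are counted by
`((k+1)/(n+1)) * C(n+1, (n-k)/2)`. -/
theorem dyck_triangle_count (n k : ℕ) (hkn : k ≤ n) (hpar : n % 2 = k % 2) :
    (((Fintype.piFinset (fun _ : Fin n => ({1, -1} : Finset ℤ))).filter
        (fun s : Fin n → ℤ =>
          (∀ i ≤ n, 0 ≤ ∑ j ∈ Finset.univ.filter (fun j : Fin n => (j : ℕ) < i), s j) ∧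
          (∑ j, s j) = (k : ℤ))).card : ℚ)
      = ((k : ℚ) + 1) / ((n : ℚ) + 1) * (Nat.choose (n + 1) ((n - k) / 2) : ℚ) :=
  Q_card n k hkn hpar
end

section
/- Let a, b, c be elements of a commutative ring and let k ≤ n be natural numbers. The total weight of all step sequences s of length n whose partial sums (started at height 0) are ≥ 0 after every step and whose final height is k equals ∑_{i=0}^{⌊(n−k)/2⌋} C(n, k+2i)·(C(k+2i, i) − C(k+2i, i−1))·a^{k+i}·b^{n−k−2i}·c^{i}. -/
open Finset

/-- The step sequences of length `L`: functions `Fin L → ℤ` with every value in `{1, 0, -1}`. -/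
def stepSeqs (L : ℕ) : Finset (Fin L → ℤ) :=
  Fintype.piFinset fun _ => ({1, 0, -1} : Finset ℤ)

/-- The weight of a step sequence: `a ^ (#up steps) * b ^ (#flat steps) * c ^ (#down steps)`. -/
def seqWeight {R : Type*} [CommRing R] (a b c : R) {L : ℕ} (s : Fin L → ℤ) : R :=
  a ^ (Finset.univ.filter (fun i => s i = 1)).card *
    b ^ (Finset.univ.filter (fun i => s i = 0)).card *
      c ^ (Finset.univ.filter (fun i => s i = -1)).card

/-- The height of a step sequence after `i` steps, started at height `h`. -/
def seqHeight {L : ℕ} (h : ℤ) (s : Fin L → ℤ) (i : ℕ) : ℤ :=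
  h + ∑ j ∈ Finset.univ.filter (fun j : Fin L => (j : ℕ) < i), s j

/- ## Auxiliary development -/

def MDm (m i : ℕ) : ℤ := (m.choose i : ℤ) - if i = 0 then 0 else (m.choose (i-1) : ℤ)
lemma MDm_zero (m : ℕ) : MDm m 0 = 1 := by simp [MDm]
lemma MDm_succ_succ (m i : ℕ) : MDm (m+1) (i+1) = MDm m (i+1) + MDm m i := by
  rcases i with _ | j
  · simp [MDm, Nat.choose_succ_succ]
  · simp only [MDm, Nat.succ_sub_one, if_neg (Nat.succ_ne_zero _)]
    push_cast [Nat.choose_succ_succ]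
    ring
lemma MDm_symm_zero (j : ℕ) : MDm (2*j+1) (j+1) = 0 := by
  have h : (2*j+1).choose (j+1) = (2*j+1).choose j := by
    rw [← Nat.choose_symm (by omega)]
    congr 1
    omega
  simp [MDm, h]
section Ring
variable {R : Type*} [CommRing R] (a b c : R)
def Mterm (n k i : ℕ) : R :=
  (n.choose (k+2*i) : R) * ((MDm (k+2*i) i : ℤ) : R) * a^(k+i) * b^(n-k-2*i) * c^i
def MG (n k : ℕ) : R := ∑ i ∈ Finset.range (n+1), Mterm a b c n k i
lemma Mterm_eq_zero {n k i : ℕ} (h : n < k + 2*i) : Mterm a b c n k i = 0 := by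
  simp [Mterm, Nat.choose_eq_zero_of_lt h]

/-- auxiliary: the "remainder" term after peeling off the b-part. -/
def Mu (n k' i : ℕ) : R :=
  (n.choose (k'+2*i) : R) * ((MDm (k'+1+2*i) i : ℤ) : R) * a^(k'+1+i) * b^(n-k'-2*i) * c^i

lemma Mterm_split (n k' i : ℕ) :
    Mterm a b c (n+1) (k'+1) i = b * Mterm a b c n (k'+1) i + Mu a b c n k' i := by
  have e1 : k'+1+2*i = (k'+2*i)+1 := by omega
  have e2 : n+1 - (k'+1) - 2*i = n - k' - 2*i := by omega
  by_cases h : k'+1+2*i ≤ n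
  · have e3 : n - (k'+1) - 2*i + 1 = n - k' - 2*i := by omega
    simp only [Mterm, Mu, e1, e2, Nat.choose_succ_succ, ← e3, pow_succ]
    push_cast
    ring
  · rw [Mterm_eq_zero a b c (by omega : n < (k'+1) + 2*i), mul_zero, zero_add]
    simp only [Mterm, Mu, e1, e2, Nat.choose_succ_succ]
    rw [Nat.choose_eq_zero_of_lt (by omega : n < k'+2*i+1)]
    push_cast
    ring

lemma Mu_zero (n k' : ℕ) : Mu a b c n k' 0 = a * Mterm a b c n k' 0 := by
  simp only [Mu, Mterm, MDm_zero, mul_zero, add_zero, Nat.add_zero]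
  push_cast
  ring

lemma Mu_succ (n k' j : ℕ) :
    Mu a b c n k' (j+1) = a * Mterm a b c n k' (j+1) + c * Mterm a b c n (k'+2) j := by
  have e1 : k'+1+2*(j+1) = (k'+2*(j+1))+1 := by omega
  have e2 : k'+2+2*j = k'+2*(j+1) := by omega
  have e3 : n - (k'+2) - 2*j = n - k' - 2*(j+1) := by omega
  have e4 : k'+2+j = k'+(j+1)+1 := by omega
  simp only [Mu, Mterm, e1, e2, e3, e4, MDm_succ_succ]
  push_cast
  ring

lemma MG_succ_pos (n k' : ℕ) :
    MG a b c (n+1) (k'+1) = a * MG a b c n k' + b * MG a b c n (k'+1) + c * MG a b c n (k'+2) := by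
  have h1 : MG a b c (n+1) (k'+1)
      = ∑ i ∈ Finset.range (n+2), (b * Mterm a b c n (k'+1) i + Mu a b c n k' i) := by
    exact Finset.sum_congr rfl fun i _ => Mterm_split a b c n k' i
  rw [h1, Finset.sum_add_distrib]
  have h2 : ∑ i ∈ Finset.range (n+2), b * Mterm a b c n (k'+1) i = b * MG a b c n (k'+1) := by
    rw [← Finset.mul_sum, Finset.sum_range_succ, Mterm_eq_zero a b c (by omega), add_zero, MG]
  have h3 : ∑ i ∈ Finset.range (n+2), Mu a b c n k' i
      = a * MG a b c n k' + c * MG a b c n (k'+2) := by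
    rw [Finset.sum_range_succ', Mu_zero]
    simp only [Mu_succ]
    rw [Finset.sum_add_distrib, ← Finset.mul_sum, ← Finset.mul_sum]
    have key : (∑ j ∈ Finset.range (n+1), Mterm a b c n k' (j+1)) + Mterm a b c n k' 0
        = MG a b c n k' := by
      rw [← Finset.sum_range_succ', Finset.sum_range_succ,
        Mterm_eq_zero a b c (by omega), add_zero]
      rfl
    have key2 : (∑ j ∈ Finset.range (n+1), Mterm a b c n (k'+2) j) = MG a b c n (k'+2) := rfl
    rw [key2]
    linear_combination a * key
  rw [h2, h3]; ring
end Ring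

section Zero
variable {R : Type*} [CommRing R] (a b c : R)

lemma Mterm_split0_zero (n : ℕ) : Mterm a b c (n+1) 0 0 = b * Mterm a b c n 0 0 := by
  simp [Mterm, MDm_zero, pow_succ]
  ring

lemma Mterm_split0 (n j : ℕ) :
    Mterm a b c (n+1) 0 (j+1) = b * Mterm a b c n 0 (j+1) + c * Mterm a b c n 1 j := by
  have emd : MDm (2*j+1+1) (j+1) = MDm (2*j+1) j := by
    rw [MDm_succ_succ, MDm_symm_zero, zero_add]
  simp only [Mterm, show 0+2*(j+1) = 2*j+1+1 from by omega,
    show 1+2*j = 2*j+1 from by omega, show 0+(j+1) = j+1 from by omega,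
    show 1+j = j+1 from by omega, show n+1-0-2*(j+1) = n-(2*j+1) from by omega,
    show n-1-2*j = n-(2*j+1) from by omega, show n-0-2*(j+1) = n-(2*j+1+1) from by omega,
    emd, Nat.choose_succ_succ n (2*j+1)]
  by_cases h : 2*j+1+1 ≤ n
  · rw [show n-(2*j+1) = (n-(2*j+1+1))+1 from by omega, pow_succ]
    push_cast
    ring
  · rw [Nat.choose_eq_zero_of_lt (by omega : n < 2*j+1+1)]
    push_cast
    ring

lemma MG_succ_zero (n : ℕ) :
    MG a b c (n+1) 0 = b * MG a b c n 0 + c * MG a b c n 1 := by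
  have h1 : MG a b c (n+1) 0
      = (∑ j ∈ Finset.range (n+1), (b * Mterm a b c n 0 (j+1) + c * Mterm a b c n 1 j))
        + b * Mterm a b c n 0 0 := by
    rw [MG, Finset.sum_range_succ', Mterm_split0_zero]
    exact congrArg (· + _) (Finset.sum_congr rfl fun j _ => Mterm_split0 a b c n j)
  rw [h1, Finset.sum_add_distrib, ← Finset.mul_sum, ← Finset.mul_sum]
  have key : (∑ j ∈ Finset.range (n+1), Mterm a b c n 0 (j+1)) + Mterm a b c n 0 0
      = MG a b c n 0 := by
    rw [← Finset.sum_range_succ', Finset.sum_range_succ,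
      Mterm_eq_zero a b c (by omega), add_zero]
    rfl
  have key2 : (∑ j ∈ Finset.range (n+1), Mterm a b c n 1 j) = MG a b c n 1 := rfl
  rw [key2]
  linear_combination b * key

lemma MG_succ (n k : ℕ) :
    MG a b c (n+1) k = (if k = 0 then 0 else a * MG a b c n (k-1))
      + b * MG a b c n k + c * MG a b c n (k+1) := by
  rcases k with _ | k'
  · rw [MG_succ_zero]
    simp
  · rw [MG_succ_pos, if_neg (Nat.succ_ne_zero k'), Nat.succ_sub_one]
end Zero

section Snoc
variable {R : Type*} [CommRing R] (a b c : R) {n : ℕ}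

lemma card_filter_snoc (t : Fin n → ℤ) (x v : ℤ) :
    (Finset.univ.filter fun i : Fin (n+1) => (Fin.snoc t x : Fin (n+1) → ℤ) i = v).card
      = (Finset.univ.filter fun i : Fin n => t i = v).card + if x = v then 1 else 0 := by
  rw [Finset.card_filter, Finset.card_filter, Fin.sum_univ_castSucc]
  simp [Fin.snoc_castSucc, Fin.snoc_last]

lemma seqWeight_snoc (t : Fin n → ℤ) (x : ℤ) :
    seqWeight a b c (Fin.snoc t x)
      = (if x = 1 then a else if x = 0 then b else if x = -1 then c else 1)
        * seqWeight a b c t := by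
  unfold seqWeight
  rw [card_filter_snoc, card_filter_snoc, card_filter_snoc, pow_add, pow_add, pow_add]
  by_cases h1 : x = 1
  · subst h1; norm_num; ring
  · by_cases h0 : x = 0
    · subst h0; norm_num; ring
    · by_cases hm : x = -1
      · subst hm; norm_num; ring
      · simp only [if_neg h1, if_neg h0, if_neg hm, pow_zero]
        ring

lemma seqHeight_snoc (h : ℤ) (t : Fin n → ℤ) (x : ℤ) {i : ℕ} (hi : i ≤ n) :
    seqHeight h (Fin.snoc t x) i = seqHeight h t i := by
  unfold seqHeight
  rw [Finset.sum_filter, Finset.sum_filter, Fin.sum_univ_castSucc]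
  simp only [Fin.snoc_castSucc, Fin.coe_castSucc, Fin.val_last]
  rw [if_neg (by omega), add_zero]

lemma seqHeight_snoc_top (h : ℤ) (t : Fin n → ℤ) (x : ℤ) :
    seqHeight h (Fin.snoc t x) (n+1) = seqHeight h t n + x := by
  unfold seqHeight
  rw [Finset.sum_filter, Finset.sum_filter, Fin.sum_univ_castSucc]
  simp only [Fin.snoc_castSucc, Fin.coe_castSucc, Fin.val_last]
  rw [if_pos (by omega)]
  have : ∀ j : Fin n, ((if (j:ℕ) < n+1 then t j else 0)) = if (j:ℕ) < n then t j else 0 := by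
    intro j
    rw [if_pos (by omega), if_pos j.is_lt]
  rw [Finset.sum_congr rfl fun j _ => this j, Fin.snoc_last]
  ring

lemma snoc_mem_stepSeqs {t : Fin n → ℤ} (ht : t ∈ stepSeqs n) {v : ℤ}
    (hv : v ∈ ({1, 0, -1} : Finset ℤ)) : Fin.snoc t v ∈ stepSeqs (n+1) := by
  rw [stepSeqs, Fintype.mem_piFinset]
  intro i
  induction i using Fin.lastCases with
  | last => rwa [Fin.snoc_last]
  | cast j => rw [Fin.snoc_castSucc]; exact Fintype.mem_piFinset.1 ht j

lemma init_mem_stepSeqs {s : Fin (n+1) → ℤ} (hs : s ∈ stepSeqs (n+1)) :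
    Fin.init s ∈ stepSeqs n := by
  rw [stepSeqs, Fintype.mem_piFinset]
  exact fun j => Fintype.mem_piFinset.1 hs j.castSucc

lemma sum_piece (n : ℕ) (m v : ℤ) (hv : v ∈ ({1, 0, -1} : Finset ℤ)) (hm : 0 ≤ m) :
    ∑ s ∈ (stepSeqs (n+1)).filter
        (fun s => ((∀ i ≤ n+1, 0 ≤ seqHeight 0 s i) ∧ seqHeight 0 s (n+1) = m)
          ∧ s (Fin.last n) = v),
      seqWeight a b c s
    = (if v = 1 then a else if v = 0 then b else if v = -1 then c else 1) *
      ∑ t ∈ (stepSeqs n).filter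
          (fun t => (∀ i ≤ n, 0 ≤ seqHeight 0 t i) ∧ seqHeight 0 t n = m - v),
        seqWeight a b c t := by
  rw [Finset.mul_sum]
  refine Finset.sum_nbij' (fun s => Fin.init s) (fun t => Fin.snoc t v) ?_ ?_ ?_ ?_ ?_
  · intro s hs
    rw [Finset.mem_filter] at hs ⊢
    obtain ⟨hmem, ⟨hnn, hfin⟩, hlast⟩ := hs
    have hsnoc : Fin.snoc (Fin.init s) v = s := by rw [← hlast, Fin.snoc_init_self]
    refine ⟨init_mem_stepSeqs hmem, fun i hi => ?_, ?_⟩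
    · have := hnn i (by omega)
      rwa [← hsnoc, seqHeight_snoc 0 _ _ hi] at this
    · have := seqHeight_snoc_top 0 (Fin.init s) v
      rw [hsnoc, hfin] at this
      show seqHeight 0 (Fin.init s) n = m - v
      omega
  · intro t ht
    rw [Finset.mem_filter] at ht ⊢
    obtain ⟨hmem, hnn, hfin⟩ := ht
    refine ⟨snoc_mem_stepSeqs hmem hv, ⟨fun i hi => ?_, ?_⟩, Fin.snoc_last _ _⟩
    · rcases Nat.lt_or_ge i (n+1) with h | h
      · rw [seqHeight_snoc 0 _ _ (by omega)]
        exact hnn i (by omega)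
      · have : i = n+1 := by omega
        subst this
        rw [seqHeight_snoc_top, hfin]
        omega
    · rw [seqHeight_snoc_top, hfin]
      ring
  · intro s hs
    rw [Finset.mem_filter] at hs
    show Fin.snoc (Fin.init s) v = s
    rw [← hs.2.2]
    exact Fin.snoc_init_self s
  · intro t _
    simp
  · intro s hs
    rw [Finset.mem_filter] at hs
    show seqWeight a b c s = _ * seqWeight a b c (Fin.init s)
    conv_lhs => rw [← Fin.snoc_init_self s]
    rw [hs.2.2, seqWeight_snoc]

end Snoc

section MFsec
variable {R : Type*} [CommRing R] (a b c : R)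

def MF (n k : ℕ) : R :=
  ∑ s ∈ (stepSeqs n).filter
      (fun s => (∀ i ≤ n, 0 ≤ seqHeight 0 s i) ∧ seqHeight 0 s n = (k : ℤ)),
    seqWeight a b c s

lemma MF_zero (k : ℕ) : MF a b c 0 k = if k = 0 then 1 else 0 := by
  have h0 : stepSeqs 0 = {(fun i => i.elim0 : Fin 0 → ℤ)} := by
    rw [stepSeqs, Fintype.piFinset_of_isEmpty]
    exact Finset.eq_singleton_iff_unique_mem.2 ⟨Finset.mem_univ _, fun t _ => by
      funext i; exact i.elim0⟩
  have hh : ∀ i : ℕ, seqHeight 0 (fun i => i.elim0 : Fin 0 → ℤ) i = 0 := by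
    intro i; simp [seqHeight]
  rcases k with _ | k'
  · rw [MF, h0, if_pos rfl]
    rw [Finset.filter_singleton, if_pos ⟨fun i _ => le_of_eq (hh i).symm, by simp [hh]⟩]
    simp [seqWeight]
  · rw [MF, h0, if_neg (Nat.succ_ne_zero k')]
    rw [Finset.filter_singleton, if_neg (by
      rintro ⟨-, h2⟩
      rw [hh 0] at h2
      omega), Finset.sum_empty]

lemma MF_succ (n k : ℕ) :
    MF a b c (n+1) k = (if k = 0 then 0 else a * MF a b c n (k-1))
      + b * MF a b c n k + c * MF a b c n (k+1) := by
  have split : ∀ s ∈ (stepSeqs (n+1)).filter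
      (fun s => (∀ i ≤ n+1, 0 ≤ seqHeight 0 s i) ∧ seqHeight 0 s (n+1) = (k : ℤ)),
      seqWeight a b c s =
        (if s (Fin.last n) = 1 then seqWeight a b c s else 0)
        + (if s (Fin.last n) = 0 then seqWeight a b c s else 0)
        + (if s (Fin.last n) = -1 then seqWeight a b c s else 0) := by
    intro s hs
    have hmem := Fintype.mem_piFinset.1 (Finset.mem_filter.1 hs).1 (Fin.last n)
    simp only [Finset.mem_insert, Finset.mem_singleton] at hmem
    rcases hmem with h | h | h <;> rw [h] <;> norm_num
  rw [MF, Finset.sum_congr rfl split, Finset.sum_add_distrib, Finset.sum_add_distrib,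
    ← Finset.sum_filter, ← Finset.sum_filter, ← Finset.sum_filter,
    Finset.filter_filter, Finset.filter_filter, Finset.filter_filter,
    sum_piece a b c n (k:ℤ) 1 (by decide) (Int.natCast_nonneg k),
    sum_piece a b c n (k:ℤ) 0 (by decide) (Int.natCast_nonneg k),
    sum_piece a b c n (k:ℤ) (-1) (by decide) (Int.natCast_nonneg k)]
  norm_num
  rcases k with _ | k'
  · rw [if_pos rfl]
    have hempty : (stepSeqs n).filter
        (fun t => (∀ i ≤ n, 0 ≤ seqHeight 0 t i) ∧ seqHeight 0 t n = ((0:ℕ):ℤ) - 1) = ∅ := by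
      apply Finset.filter_false_of_mem
      rintro t _ ⟨h1, h2⟩
      have := h1 n le_rfl
      rw [h2] at this
      omega
    rw [hempty, Finset.sum_empty, mul_zero]
    have e1 : ((0:ℕ):ℤ) + 1 = ((0+1:ℕ):ℤ) := by norm_num
    rw [e1]
    rfl
  · rw [if_neg (Nat.succ_ne_zero k')]
    have e1 : ((k'+1:ℕ):ℤ) - 1 = ((k':ℕ):ℤ) := by push_cast; ring
    have e2 : ((k'+1:ℕ):ℤ) + 1 = ((k'+1+1:ℕ):ℤ) := by push_cast; ring
    rw [e1, e2, Nat.add_sub_cancel]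
    rfl

end MFsec

section Final
variable {R : Type*} [CommRing R] (a b c : R)

lemma MG_zero (k : ℕ) : MG a b c 0 k = if k = 0 then 1 else 0 := by
  rcases k with _ | k
  · simp [MG, Mterm, MDm]
  · simp [MG, Mterm, MDm]

lemma MF_eq_MG (n k : ℕ) : MF a b c n k = MG a b c n k := by
  induction n generalizing k with
  | zero => rw [MF_zero, MG_zero]
  | succ n ih => rw [MF_succ, MG_succ, ih, ih, ih]

end Final

/-- the total weight of weighted Motzkin paths from `(0,0)` to `(n,k)`. -/
theorem weighted_motzkin_paths {R : Type*} [CommRing R] (a b c : R) (n k : ℕ) (hkn : k ≤ n) :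
    (∑ s ∈ (stepSeqs n).filter
        (fun s => (∀ i ≤ n, 0 ≤ seqHeight 0 s i) ∧ seqHeight 0 s n = (k : ℤ)),
      seqWeight a b c s)
      = ∑ i ∈ Finset.range ((n - k) / 2 + 1),
          (Nat.choose n (k + 2 * i) : R) *
            ((Nat.choose (k + 2 * i) i : R) -
              (if i = 0 then 0 else (Nat.choose (k + 2 * i) (i - 1) : R))) *
            a ^ (k + i) * b ^ (n - k - 2 * i) * c ^ i := by
  have h1 : (∑ s ∈ (stepSeqs n).filter
        (fun s => (∀ i ≤ n, 0 ≤ seqHeight 0 s i) ∧ seqHeight 0 s n = (k : ℤ)),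
      seqWeight a b c s) = MF a b c n k := rfl
  rw [h1, MF_eq_MG, MG]
  rw [← Finset.sum_subset (Finset.range_subset_range.2 (by omega : (n-k)/2 + 1 ≤ n+1))]
  · apply Finset.sum_congr rfl
    intro i _
    simp only [Mterm, MDm]
    push_cast
    ring_nf
  · intro i hi hni
    simp only [Finset.mem_range] at hi hni
    exact Mterm_eq_zero a b c (by omega)
end

section
/- Let a, b, c be elements of a commutative ring and let 1 ≤ k ≤ n be natural numbers. Then P_{n,k}, the total weight of all step sequences of length n−1 which, started at height 1, have height ≥ 1 after every step and final height k, equals ∑_{i=0}^{⌊(n−k)/2⌋} C(n−1, k+2i−1)·(C(k+2i−1, i) − C(k+2i−1, i−1))·a^{k+i−1}·b^{n−k−2i}·c^{i}. -/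
open Finset

namespace PnkAux


lemma filter_card_snoc {L : ℕ} (s : Fin L → ℤ) (v : ℤ) (z : ℤ) :
    (Finset.univ.filter (fun i : Fin (L+1) => (Fin.snoc s v : Fin (L+1) → ℤ) i = z)).card
      = (Finset.univ.filter (fun i : Fin L => s i = z)).card + (if v = z then 1 else 0) := by
  rw [Finset.card_filter, Finset.card_filter, Fin.sum_univ_castSucc]
  simp [Fin.snoc_castSucc, Fin.snoc_last]

lemma seqWeight_snoc {R : Type*} [CommRing R] (a b c : R) {L : ℕ} (s : Fin L → ℤ) (v : ℤ) :
    seqWeight a b c (Fin.snoc s v) =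
      seqWeight a b c s * ((if v = 1 then a else 1) * (if v = 0 then b else 1) *
        (if v = -1 then c else 1)) := by
  unfold seqWeight
  rw [filter_card_snoc, filter_card_snoc, filter_card_snoc]
  split <;> split <;> split <;> (try omega) <;> simp [pow_succ] <;> ring

lemma seqHeight_snoc {L : ℕ} (h : ℤ) (s : Fin L → ℤ) (v : ℤ) {i : ℕ} (hi : i ≤ L) :
    seqHeight h (Fin.snoc s v) i = seqHeight h s i := by
  unfold seqHeight
  congr 1
  rw [Finset.sum_filter, Finset.sum_filter, Fin.sum_univ_castSucc]
  simp only [Fin.snoc_castSucc, Fin.coe_castSucc, Fin.snoc_last, Fin.val_last]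
  rw [if_neg (by omega)]
  ring

lemma seqHeight_snoc_last {L : ℕ} (h : ℤ) (s : Fin L → ℤ) (v : ℤ) :
    seqHeight h (Fin.snoc s v) (L+1) = seqHeight h s L + v := by
  unfold seqHeight
  rw [Finset.sum_filter, Finset.sum_filter, Fin.sum_univ_castSucc]
  simp only [Fin.snoc_castSucc, Fin.coe_castSucc, Fin.snoc_last, Fin.val_last]
  rw [if_pos (by omega)]
  have : ∀ j : Fin L, ((j:ℕ) < L + 1) = ((j:ℕ) < L) := by
    intro j; simp [Nat.lt_succ_iff, j.isLt, Nat.le_of_lt]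
  simp only [this]
  ring

lemma snoc_mem_stepSeqs {L : ℕ} {s : Fin L → ℤ} {v : ℤ} :
    Fin.snoc s v ∈ stepSeqs (L+1) ↔ s ∈ stepSeqs L ∧ v ∈ ({1,0,-1} : Finset ℤ) := by
  simp only [stepSeqs, Fintype.mem_piFinset]
  constructor
  · intro hs
    refine ⟨fun i => ?_, ?_⟩
    · have := hs i.castSucc; rwa [Fin.snoc_castSucc] at this
    · have := hs (Fin.last L); rwa [Fin.snoc_last] at this
  · rintro ⟨h1, h2⟩ i
    refine Fin.lastCases ?_ ?_ i
    · rwa [Fin.snoc_last]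
    · intro j; rw [Fin.snoc_castSucc]; exact h1 j



lemma sum_snoc_decomp {R : Type*} [CommRing R] {L : ℕ}
    (P : (Fin (L+1) → ℤ) → Prop) [DecidablePred P]
    (F : (Fin (L+1) → ℤ) → R) :
    ∑ s ∈ (stepSeqs (L+1)).filter P, F s
      = ∑ v ∈ ({1,0,-1} : Finset ℤ),
          ∑ s ∈ (stepSeqs L).filter (fun s => P (Fin.snoc s v)), F (Fin.snoc s v) := by
  rw [Finset.sum_sigma' (({1,0,-1} : Finset ℤ))
      (fun v => (stepSeqs L).filter (fun s => P (Fin.snoc s v)))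
      (fun v s => F (Fin.snoc s v))]
  apply Finset.sum_nbij' (fun s => ⟨s (Fin.last L), Fin.init s⟩)
    (fun x => Fin.snoc x.2 x.1)
  · intro s hs
    simp only [Finset.mem_filter, stepSeqs, Fintype.mem_piFinset] at hs
    simp only [Finset.mem_sigma, Finset.mem_filter, stepSeqs, Fintype.mem_piFinset]
    refine ⟨hs.1 _, fun i => hs.1 _, ?_⟩
    rw [Fin.snoc_init_self]; exact hs.2
  · intro x hx
    simp only [Finset.mem_sigma, Finset.mem_filter, stepSeqs, Fintype.mem_piFinset] at hx
    simp only [Finset.mem_filter, stepSeqs, Fintype.mem_piFinset]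
    refine ⟨fun i => ?_, hx.2.2⟩
    refine Fin.lastCases ?_ ?_ i
    · rw [Fin.snoc_last]; exact hx.1
    · intro j; rw [Fin.snoc_castSucc]; exact hx.2.1 j
  · intro s _; exact Fin.snoc_init_self s
  · intro x _
    refine Sigma.ext ?_ ?_ <;> simp [Fin.snoc_last, Fin.init_snoc]
  · intro s _; rw [Fin.snoc_init_self]



/-- `Q L k` : total weight of step sequences of length `L` from height 1 staying `≥ 1`,
ending at height `k`. -/
def Q {R : Type*} [CommRing R] (a b c : R) (L : ℕ) (k : ℤ) : R :=
  ∑ s ∈ (stepSeqs L).filter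
      (fun s => (∀ i ≤ L, 1 ≤ seqHeight 1 s i) ∧ seqHeight 1 s L = k),
    seqWeight a b c s

lemma Q_nonpos {R : Type*} [CommRing R] (a b c : R) (L : ℕ) {k : ℤ} (hk : k ≤ 0) :
    Q a b c L k = 0 := by
  apply Finset.sum_eq_zero
  intro s hs
  simp only [Finset.mem_filter] at hs
  have h1 := hs.2.1 L le_rfl
  have h2 := hs.2.2
  omega

lemma Q_zero {R : Type*} [CommRing R] (a b c : R) (k : ℤ) :
    Q a b c 0 k = if k = 1 then 1 else 0 := by
  have hs : stepSeqs 0 = {(Fin.elim0 : Fin 0 → ℤ)} := by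
    apply Finset.eq_singleton_iff_unique_mem.2
    constructor
    · simp [stepSeqs, Fintype.mem_piFinset]; exact Subsingleton.elim _ _
    · intro f _; funext i; exact i.elim0
  have hh : ∀ i : ℕ, seqHeight 1 (Fin.elim0 : Fin 0 → ℤ) i = 1 := by
    intro i; simp [seqHeight]
  rw [Q, hs]
  by_cases hk : k = 1
  · rw [Finset.filter_singleton, if_pos (by simp [hh, hk]), Finset.sum_singleton,
      if_pos hk]
    simp [seqWeight]
  · rw [Finset.filter_singleton, if_neg (by simp [hh]; omega), if_neg hk]
    simp

lemma Q_rec {R : Type*} [CommRing R] (a b c : R) (L : ℕ) {k : ℤ} (hk : 1 ≤ k) :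
    Q a b c (L+1) k = a * Q a b c L (k-1) + b * Q a b c L k + c * Q a b c L (k+1) := by
  rw [Q, sum_snoc_decomp]
  have hcond : ∀ (v : ℤ) (s : Fin L → ℤ),
      ((∀ i ≤ L+1, 1 ≤ seqHeight 1 (Fin.snoc s v : Fin (L+1) → ℤ) i) ∧
        seqHeight 1 (Fin.snoc s v : Fin (L+1) → ℤ) (L+1) = k)
      ↔ ((∀ i ≤ L, 1 ≤ seqHeight 1 s i) ∧ seqHeight 1 s L = k - v) := by
    intro v s
    rw [seqHeight_snoc_last]
    constructor
    · rintro ⟨h1, h2⟩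
      refine ⟨fun i hi => ?_, by omega⟩
      have := h1 i (by omega)
      rwa [seqHeight_snoc _ _ _ hi] at this
    · rintro ⟨h1, h2⟩
      refine ⟨fun i hi => ?_, by omega⟩
      rcases Nat.lt_or_ge i (L+1) with h | h
      · rw [seqHeight_snoc _ _ _ (by omega)]; exact h1 i (by omega)
      · have : i = L + 1 := by omega
        rw [this, seqHeight_snoc_last]; omega
  have hinner : ∀ v : ℤ,
      (∑ s ∈ (stepSeqs L).filter (fun s =>
          (∀ i ≤ L+1, 1 ≤ seqHeight 1 (Fin.snoc s v : Fin (L+1) → ℤ) i) ∧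
            seqHeight 1 (Fin.snoc s v : Fin (L+1) → ℤ) (L+1) = k),
        seqWeight a b c (Fin.snoc s v))
      = ((if v = 1 then a else 1) * (if v = 0 then b else 1) * (if v = -1 then c else 1))
          * Q a b c L (k - v) := by
    intro v
    rw [Q, Finset.mul_sum,
      Finset.filter_congr (fun (s : Fin L → ℤ) (_ : s ∈ stepSeqs L) => hcond v s)]
    apply Finset.sum_congr rfl
    intro s _
    rw [seqWeight_snoc]; ring
  rw [Finset.sum_congr rfl (fun v _ => hinner v)]
  rw [show ({1,0,-1} : Finset ℤ) = insert 1 (insert 0 {-1}) from rfl]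
  rw [Finset.sum_insert (by decide), Finset.sum_insert (by decide), Finset.sum_singleton]
  norm_num
  ring



def B (m i : ℕ) : ℤ := (m.choose i : ℤ) - (if i = 0 then 0 else (m.choose (i-1) : ℤ))
lemma B_zero (m : ℕ) : B m 0 = 1 := by simp [B]
lemma B_succ (m j : ℕ) : B (m+1) (j+1) = B m (j+1) + B m j := by
  cases j with
  | zero => simp [B, Nat.choose_succ_succ']
  | succ j =>
    simp only [B, Nat.choose_succ_succ' m (j+1), Nat.choose_succ_succ' m j,
      Nat.succ_ne_zero, if_neg, Nat.add_sub_cancel, if_false]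
    push_cast; ring
lemma B_mid (j : ℕ) : B (2*j+1) (j+1) = 0 := by
  simp only [B, Nat.succ_ne_zero, if_false, Nat.add_sub_cancel]
  have : (2*j+1).choose (j+1) = (2*j+1).choose j := by
    rw [← Nat.choose_symm (by omega)]
    congr 1; omega
  rw [this]; ring

def T {R : Type*} [CommRing R] (a b c : R) (L K i : ℕ) : R :=
  (Nat.choose L (K + 2*i) : R) * ((B (K + 2*i) i : ℤ) : R) * a^(K+i) * b^(L - K - 2*i) * c^i

variable {R : Type*} [CommRing R] (a b c : R)


lemma T_pascal (L K i : ℕ) :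
    T a b c (L+1) (K+1) i
      = a * T a b c L K i + b * T a b c L (K+1) i
        + (if i = 0 then 0 else c * T a b c L (K+2) (i-1)) := by
  cases i with
  | zero =>
    simp only [if_pos, Nat.mul_zero, Nat.add_zero, T, B_zero, Int.cast_one, mul_one, pow_zero]
    rcases Nat.lt_or_ge L (K+1) with h | h
    · rcases Nat.lt_or_ge L K with h2 | h2
      · rw [show (L+1).choose (K+1) = 0 from Nat.choose_eq_zero_of_lt (by omega),
          show L.choose K = 0 from Nat.choose_eq_zero_of_lt (by omega),
          show L.choose (K+1) = 0 from Nat.choose_eq_zero_of_lt (by omega)]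
        simp
      · have h3 : K = L := by omega
        rw [show (L+1).choose (K+1) = 1 by rw [h3]; exact Nat.choose_self _,
          show L.choose K = 1 by rw [h3]; exact Nat.choose_self _,
          show L.choose (K+1) = 0 from Nat.choose_eq_zero_of_lt (by omega)]
        rw [show L + 1 - (K+1) - 0 = 0 by omega, show L - K - 0 = 0 by omega]
        simp [pow_succ]
        ring
    · rw [show L + 1 - (K+1) - 2*0 = (L - (K+1) - 2*0) + 1 by omega,
        show L - K - 2*0 = (L - (K+1) - 2*0) + 1 by omega,
        Nat.choose_succ_succ' L K]
      push_cast; ring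
  | succ j =>
    simp only [Nat.succ_ne_zero, if_false, Nat.add_sub_cancel, T]
    rw [show K+1+2*(j+1) = K+2*j+3 by ring, show K+2*(j+1) = K+2*j+2 by ring,
      show K+2+2*j = K+2*j+2 by ring]
    have pas : (L+1).choose (K+2*j+3) = L.choose (K+2*j+2) + L.choose (K+2*j+3) := by
      rw [show K+2*j+3 = (K+2*j+2)+1 by omega]
      exact Nat.choose_succ_succ' L (K+2*j+2)
    have eB : B (K+2*j+3) (j+1) = B (K+2*j+2) (j+1) + B (K+2*j+2) j := by
      rw [show K+2*j+3 = (K+2*j+2)+1 by omega]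
      exact B_succ _ _
    rcases Nat.lt_or_ge L (K+2*j+2) with h | h
    · -- everything vanishes
      rw [show (L+1).choose (K+2*j+3) = 0 from Nat.choose_eq_zero_of_lt (by omega),
        show L.choose (K+2*j+2) = 0 from Nat.choose_eq_zero_of_lt (by omega),
        show L.choose (K+2*j+3) = 0 from Nat.choose_eq_zero_of_lt (by omega)]
      simp
    · rw [pas, eB]
      rcases Nat.lt_or_ge L (K+2*j+3) with h2 | h2
      · -- L = K+2j+2 exactly : the b-term choose vanishes, all b-exponents are 0
        rw [show L.choose (K+2*j+3) = 0 from Nat.choose_eq_zero_of_lt (by omega),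
          show L + 1 - (K+1) - 2*(j+1) = 0 by omega,
          show L - K - 2*(j+1) = 0 by omega,
          show L - (K+2) - 2*j = 0 by omega]
        push_cast; ring
      · rw [show L + 1 - (K+1) - 2*(j+1) = (L - (K+1) - 2*(j+1)) + 1 by omega,
          show L - K - 2*(j+1) = (L - (K+1) - 2*(j+1)) + 1 by omega,
          show L - (K+2) - 2*j = (L - (K+1) - 2*(j+1)) + 1 by omega]
        push_cast; ring

lemma T_pascal_zero (L i : ℕ) :
    T a b c (L+1) 0 i
      = b * T a b c L 0 i + (if i = 0 then 0 else c * T a b c L 1 (i-1)) := by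
  cases i with
  | zero =>
    simp only [if_pos, Nat.mul_zero, Nat.add_zero, T, B_zero, Int.cast_one, mul_one, pow_zero,
      Nat.choose_zero_right, Nat.cast_one, one_mul]
    rw [show L + 1 - 0 - 2*0 = (L - 0 - 2*0) + 1 by omega]
    ring
  | succ j =>
    simp only [Nat.succ_ne_zero, if_false, Nat.add_sub_cancel, T]
    rw [show (0:ℕ)+2*(j+1) = 2*j+2 by ring, show (1:ℕ)+2*j = 2*j+1 by ring]
    have pas : (L+1).choose (2*j+2) = L.choose (2*j+1) + L.choose (2*j+2) := by
      rw [show 2*j+2 = (2*j+1)+1 by omega]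
      exact Nat.choose_succ_succ' L (2*j+1)
    have eB : B (2*j+2) (j+1) = B (2*j+1) (j+1) + B (2*j+1) j := by
      rw [show 2*j+2 = (2*j+1)+1 by omega]
      exact B_succ _ _
    rcases Nat.lt_or_ge L (2*j+1) with h | h
    · rw [show (L+1).choose (2*j+2) = 0 from Nat.choose_eq_zero_of_lt (by omega),
        show L.choose (2*j+2) = 0 from Nat.choose_eq_zero_of_lt (by omega),
        show L.choose (2*j+1) = 0 from Nat.choose_eq_zero_of_lt (by omega)]
      simp
    · rw [pas, eB, B_mid]
      rcases Nat.lt_or_ge L (2*j+2) with h2 | h2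
      · rw [show L.choose (2*j+2) = 0 from Nat.choose_eq_zero_of_lt (by omega),
          show L + 1 - 0 - 2*(j+1) = 0 by omega,
          show L - 0 - 2*(j+1) = 0 by omega,
          show L - 1 - 2*j = 0 by omega]
        push_cast; ring
      · rw [show L + 1 - 0 - 2*(j+1) = (L - 0 - 2*(j+1)) + 1 by omega,
          show L - 1 - 2*j = (L - 0 - 2*(j+1)) + 1 by omega]
        push_cast; ring


def G {R : Type*} [CommRing R] (a b c : R) (L K : ℕ) : R :=
  ∑ i ∈ Finset.range ((L - K)/2 + 1), T a b c L K i

lemma T_eq_zero {R : Type*} [CommRing R] (a b c : R) {L K i : ℕ} (h : L < K + 2*i) :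
    T a b c L K i = 0 := by
  simp [T, Nat.choose_eq_zero_of_lt h]

lemma G_ext {R : Type*} [CommRing R] (a b c : R) (L K N : ℕ) (hN : (L-K)/2 + 1 ≤ N) :
    G a b c L K = ∑ i ∈ Finset.range N, T a b c L K i := by
  rw [G]
  apply Finset.sum_subset (Finset.range_subset_range.2 hN)
  intro i _ hi
  rw [Finset.mem_range, not_lt] at hi
  exact T_eq_zero a b c (by omega)


lemma B_cast (m i : ℕ) :
    ((B m i : ℤ) : R) = (m.choose i : R) - (if i = 0 then 0 else (m.choose (i-1) : R)) := by
  rcases eq_or_ne i 0 with h | h <;> simp [B, h]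

lemma G_rec (L K : ℕ) :
    G a b c (L+1) K
      = (if K = 0 then 0 else a * G a b c L (K - 1)) + b * G a b c L K
        + c * G a b c L (K+1) := by
  rw [G_ext a b c (L+1) K (L+3) (by omega),
      G_ext a b c L K (L+3) (by omega),
      G_ext a b c L (K+1) (L+2) (by omega),
      Finset.mul_sum, Finset.mul_sum]
  have hshift : ∀ K' : ℕ, (∑ j ∈ Finset.range (L+2), c * T a b c L K' j)
      = ∑ i ∈ Finset.range (L+3), (if i = 0 then 0 else c * T a b c L K' (i-1)) := by
    intro K'
    rw [Finset.sum_range_succ' (fun i => if i = 0 then 0 else c * T a b c L K' (i-1)) (L+2)]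
    simp
  cases K with
  | zero =>
    rw [if_pos rfl, zero_add, hshift 1, ← Finset.sum_add_distrib]
    exact Finset.sum_congr rfl (fun i _ => T_pascal_zero a b c L i)
  | succ K' =>
    rw [if_neg (Nat.succ_ne_zero K'), Nat.succ_sub_one,
      G_ext a b c L K' (L+3) (by omega), Finset.mul_sum, hshift (K'+2),
      ← Finset.sum_add_distrib, ← Finset.sum_add_distrib]
    exact Finset.sum_congr rfl (fun i _ => T_pascal a b c L K' i)

lemma Q_eq_G : ∀ (L K : ℕ), Q a b c L ((K:ℤ)+1) = G a b c L K := by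
  intro L
  induction L with
  | zero =>
    intro K
    rw [Q_zero, G_ext a b c 0 K 1 (by omega), Finset.sum_range_one]
    cases K with
    | zero => simp [T, B_zero]
    | succ K' =>
      rw [if_neg (by push_cast; omega)]
      simp [T, Nat.choose_eq_zero_of_lt (show 0 < K'+1+2*0 by omega)]
  | succ L ih =>
    intro K
    rw [Q_rec a b c L (by omega : (1:ℤ) ≤ (K:ℤ)+1), G_rec]
    congr 1
    congr 1
    · cases K with
      | zero =>
        rw [if_pos rfl, show ((0:ℕ):ℤ)+1-1 = 0 by norm_num,
          Q_nonpos a b c L le_rfl, mul_zero]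
      | succ K' =>
        rw [if_neg (Nat.succ_ne_zero K'), Nat.succ_sub_one,
          show ((K'+1:ℕ):ℤ)+1-1 = (K':ℤ)+1 by push_cast; ring, ih K']
    · rw [ih K]
    · rw [show ((K:ℤ)+1)+1 = ((K+1:ℕ):ℤ)+1 by push_cast; ring, ih (K+1)]

end PnkAux

open PnkAux

/-- `P_{n,k}`, the total weight of step sequences of length `n-1` started at
height `1`, staying at height `≥ 1`, with final height `k`. -/
theorem weighted_paths_P_n_k {R : Type*} [CommRing R] (a b c : R) (n k : ℕ)
    (hk : 1 ≤ k) (hkn : k ≤ n) :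
    (∑ s ∈ (stepSeqs (n - 1)).filter
        (fun s => (∀ i ≤ n - 1, 1 ≤ seqHeight 1 s i) ∧ seqHeight 1 s (n - 1) = (k : ℤ)),
      seqWeight a b c s)
      = ∑ i ∈ Finset.range ((n - k) / 2 + 1),
          (Nat.choose (n - 1) (k + 2 * i - 1) : R) *
            ((Nat.choose (k + 2 * i - 1) i : R) -
              (if i = 0 then 0 else (Nat.choose (k + 2 * i - 1) (i - 1) : R))) *
            a ^ (k + i - 1) * b ^ (n - k - 2 * i) * c ^ i := by
  have h0 : (∑ s ∈ (stepSeqs (n - 1)).filter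
        (fun s => (∀ i ≤ n - 1, 1 ≤ seqHeight 1 s i) ∧ seqHeight 1 s (n - 1) = (k : ℤ)),
      seqWeight a b c s) = Q a b c (n-1) ((k:ℤ)) := rfl
  rw [h0, show ((k:ℤ)) = (((k-1:ℕ)):ℤ)+1 by omega, Q_eq_G, G,
    show ((n-1) - (k-1))/2 + 1 = (n-k)/2 + 1 by omega]
  apply Finset.sum_congr rfl
  intro i _
  have e1 : k + 2*i - 1 = (k-1) + 2*i := by omega
  have e2 : k + i - 1 = (k-1) + i := by omega
  have e3 : n - k - 2*i = (n-1) - (k-1) - 2*i := by omega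
  rw [e1, e2, e3]
  rw [T, B_cast]
end

section
/- Let a, b, c be reals with a > 0, b ≥ 0, c ≥ 0, and let n ≥ 2 be a natural number. Then ∑_{i=0}^{⌊(n−2)/2⌋} C(n−2, 2i)·Cat(i)·a^{i}·b^{n−2−2i}·c^{i+1} = −(1/4)^n/(2·a) · ∑_{r=0}^{n} C(2(n−r), n−r)·C(2r, r)·(b + 2·√(a·c))^{n−r}·(b − 2·√(a·c))^{r} / ((2(n−r) − 1)·(2r − 1)), where the divisors 2(n−r)−1 and 2r−1 are signed integers (equal to −1 when n−r = 0 or r = 0 respectively). -/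
open Finset

noncomputable def cc (k : ℕ) : ℝ :=
  -(Nat.choose (2 * k) k : ℝ) / ((2 * (k : ℝ) - 1) * 4 ^ k)

lemma two_cast_sub_one_ne (k : ℕ) : (2 * (k : ℝ) - 1) ≠ 0 := by
  rcases k with _ | k
  · norm_num
  · have : (0:ℝ) ≤ (k:ℝ) := Nat.cast_nonneg k
    push_cast
    nlinarith

lemma cc_rec (k : ℕ) : ((k : ℝ) + 1) * cc (k + 1) = ((k : ℝ) - 1 / 2) * cc k := by
  have h := Nat.succ_mul_centralBinom_succ k
  have h' : ((k : ℝ) + 1) * (Nat.choose (2 * (k + 1)) (k + 1) : ℝ)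
      = 2 * (2 * (k : ℝ) + 1) * (Nat.choose (2 * k) k : ℝ) := by
    have := congrArg (Nat.cast (R := ℝ)) h
    push_cast [Nat.centralBinom_eq_two_mul_choose] at this
    linarith
  have h1 : (2 * ((k:ℝ) + 1) - 1) ≠ 0 := by
    have : (0:ℝ) ≤ (k:ℝ) := Nat.cast_nonneg k
    nlinarith
  have h2 : (2 * (k : ℝ) - 1) ≠ 0 := two_cast_sub_one_ne k
  have h4 : (4 : ℝ) ^ k ≠ 0 := by positivity
  rw [cc, cc]
  push_cast
  have h1' : (2 * (k:ℝ) + 1) ≠ 0 := by positivity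
  field_simp
  have e1 : ((k:ℝ) + 1) * 2 - 1 ≠ 0 := by intro h; apply h1; linarith
  have e2 : (k:ℝ) * 2 - 1 ≠ 0 := by intro h; apply h2; linarith
  rw [neg_inj, div_eq_div_iff e1 e2]
  linear_combination (2*(4:ℝ)^k*((k:ℝ)*2-1)) * h'

lemma cc_zero : cc 0 = 1 := by norm_num [cc]
lemma cc_one : cc 1 = -(1 / 2) := by
  have : Nat.choose 2 1 = 2 := by decide
  norm_num [cc, this]
lemma cc_two : cc 2 = -(1 / 8) := by
  have : Nat.choose 4 2 = 6 := by decide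
  norm_num [cc, this]
lemma cc_three : cc 3 = -(1 / 16) := by
  have : Nat.choose 6 3 = 20 := by decide
  norm_num [cc, this]

noncomputable def FF (b s : ℝ) (n : ℕ) : ℝ :=
  ∑ p ∈ Finset.HasAntidiagonal.antidiagonal n, cc p.1 * cc p.2 * (b + 2 * s) ^ p.1 * (b - 2 * s) ^ p.2

noncomputable def GG (b s : ℝ) (n : ℕ) : ℝ :=
  ∑ j ∈ Finset.range n,
    (Nat.choose (n - 2) (2 * j) : ℝ) * (catalan j : ℝ) * (s ^ 2) ^ (j + 1) * b ^ (n - 2 - 2 * j)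

lemma FF_two (b s : ℝ) : FF b s 2 = -2 * s ^ 2 := by
  rw [FF, Finset.Nat.sum_antidiagonal_eq_sum_range_succ_mk]
  simp [Finset.sum_range_succ, cc_zero, cc_one, cc_two]
  ring

lemma FF_three (b s : ℝ) : FF b s 3 = -2 * b * s ^ 2 := by
  rw [FF, Finset.Nat.sum_antidiagonal_eq_sum_range_succ_mk]
  simp [Finset.sum_range_succ, cc_zero, cc_one, cc_two, cc_three]
  ring

lemma GG_two (b s : ℝ) : GG b s 2 = s ^ 2 := by
  simp [GG, Finset.sum_range_succ]

lemma GG_three (b s : ℝ) : GG b s 3 = b * s ^ 2 := by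
  simp [GG, Finset.sum_range_succ, Nat.choose]
  ring

lemma key1 (b s : ℝ) (m : ℕ) :
    ∑ p ∈ Finset.HasAntidiagonal.antidiagonal (m+1),
      (p.1 : ℝ) * (cc p.1 * cc p.2 * (b+2*s) ^ p.1 * (b-2*s) ^ p.2)
    = (b+2*s) * ∑ p ∈ Finset.HasAntidiagonal.antidiagonal m,
        ((p.1 : ℝ) - 1/2) * (cc p.1 * cc p.2 * (b+2*s) ^ p.1 * (b-2*s) ^ p.2) := by
  rw [Finset.Nat.sum_antidiagonal_succ, Finset.mul_sum]
  simp only [Nat.cast_zero, zero_mul, zero_add]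
  refine Finset.sum_congr rfl fun p _ => ?_
  have h := cc_rec p.1
  push_cast
  rw [pow_succ]
  linear_combination (cc p.2 * (b+2*s) ^ p.1 * (b+2*s) * (b-2*s) ^ p.2) * h

lemma key2 (b s : ℝ) (m : ℕ) :
    ∑ p ∈ Finset.HasAntidiagonal.antidiagonal (m+1),
      (p.2 : ℝ) * (cc p.1 * cc p.2 * (b+2*s) ^ p.1 * (b-2*s) ^ p.2)
    = (b-2*s) * ∑ p ∈ Finset.HasAntidiagonal.antidiagonal m,
        ((p.2 : ℝ) - 1/2) * (cc p.1 * cc p.2 * (b+2*s) ^ p.1 * (b-2*s) ^ p.2) := by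
  rw [Finset.Nat.sum_antidiagonal_succ', Finset.mul_sum]
  simp only [Nat.cast_zero, zero_mul, zero_add]
  refine Finset.sum_congr rfl fun p _ => ?_
  have h := cc_rec p.2
  push_cast
  rw [pow_succ]
  linear_combination (cc p.1 * (b+2*s) ^ p.1 * (b-2*s) ^ p.2 * (b-2*s)) * h

lemma FF_rec (b s : ℝ) (n : ℕ) :
    ((n:ℝ) + 2) * FF b s (n+2)
      = b * (2*(n:ℝ) + 1) * FF b s (n+1)
        - (b+2*s) * (b-2*s) * ((n:ℝ) - 1) * FF b s n := by
  have split : ((n:ℝ) + 2) * FF b s (n+2)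
      = (∑ p ∈ Finset.HasAntidiagonal.antidiagonal (n+2),
          (p.1 : ℝ) * (cc p.1 * cc p.2 * (b+2*s) ^ p.1 * (b-2*s) ^ p.2))
        + ∑ p ∈ Finset.HasAntidiagonal.antidiagonal (n+2),
          (p.2 : ℝ) * (cc p.1 * cc p.2 * (b+2*s) ^ p.1 * (b-2*s) ^ p.2) := by
    rw [FF, Finset.mul_sum, ← Finset.sum_add_distrib]
    refine Finset.sum_congr rfl fun p hp => ?_
    have hm : p.1 + p.2 = n + 2 := Finset.HasAntidiagonal.mem_antidiagonal.mp hp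
    have hm' : (p.1 : ℝ) + (p.2 : ℝ) = (n : ℝ) + 2 := by exact_mod_cast congrArg (Nat.cast (R:=ℝ)) hm
    linear_combination (-(cc p.1 * cc p.2 * (b+2*s) ^ p.1 * (b-2*s) ^ p.2)) * hm'
  have step1 : (b+2*s) * (∑ p ∈ Finset.HasAntidiagonal.antidiagonal (n+1),
          ((p.1 : ℝ) - 1/2) * (cc p.1 * cc p.2 * (b+2*s) ^ p.1 * (b-2*s) ^ p.2))
      + (b-2*s) * (∑ p ∈ Finset.HasAntidiagonal.antidiagonal (n+1),
          ((p.2 : ℝ) - 1/2) * (cc p.1 * cc p.2 * (b+2*s) ^ p.1 * (b-2*s) ^ p.2))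
      - b * (2*(n:ℝ) + 1) * FF b s (n+1)
      = ∑ p ∈ Finset.HasAntidiagonal.antidiagonal (n+1),
          (- ((p.2 : ℝ) * (cc p.1 * cc p.2 * (b+2*s) ^ (p.1+1) * (b-2*s) ^ p.2))
           - (p.1 : ℝ) * (cc p.1 * cc p.2 * (b+2*s) ^ p.1 * (b-2*s) ^ (p.2+1))) := by
    rw [FF]
    simp only [Finset.mul_sum, ← Finset.sum_sub_distrib, ← Finset.sum_add_distrib]
    refine Finset.sum_congr rfl fun p hp => ?_
    have hm : p.1 + p.2 = n + 1 := Finset.HasAntidiagonal.mem_antidiagonal.mp hp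
    have hm' : (p.1 : ℝ) + (p.2 : ℝ) = (n : ℝ) + 1 := by exact_mod_cast congrArg (Nat.cast (R:=ℝ)) hm
    rw [pow_succ, pow_succ]
    linear_combination (2 * b * (cc p.1 * cc p.2 * (b+2*s) ^ p.1 * (b-2*s) ^ p.2)) * hm'
  have t1 : ∑ p ∈ Finset.HasAntidiagonal.antidiagonal (n+1),
        (p.2 : ℝ) * (cc p.1 * cc p.2 * (b+2*s) ^ (p.1+1) * (b-2*s) ^ p.2)
      = (b+2*s) * ((b-2*s) * ∑ p ∈ Finset.HasAntidiagonal.antidiagonal n,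
          ((p.2 : ℝ) - 1/2) * (cc p.1 * cc p.2 * (b+2*s) ^ p.1 * (b-2*s) ^ p.2)) := by
    rw [← key2 b s n, Finset.mul_sum]
    refine Finset.sum_congr rfl fun p _ => ?_
    rw [pow_succ]; ring
  have t2 : ∑ p ∈ Finset.HasAntidiagonal.antidiagonal (n+1),
        (p.1 : ℝ) * (cc p.1 * cc p.2 * (b+2*s) ^ p.1 * (b-2*s) ^ (p.2+1))
      = (b-2*s) * ((b+2*s) * ∑ p ∈ Finset.HasAntidiagonal.antidiagonal n,
          ((p.1 : ℝ) - 1/2) * (cc p.1 * cc p.2 * (b+2*s) ^ p.1 * (b-2*s) ^ p.2)) := by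
    rw [← key1 b s n, Finset.mul_sum]
    refine Finset.sum_congr rfl fun p _ => ?_
    rw [pow_succ]; ring
  have fin : ∑ p ∈ Finset.HasAntidiagonal.antidiagonal n,
        ((p.2 : ℝ) - 1/2) * (cc p.1 * cc p.2 * (b+2*s) ^ p.1 * (b-2*s) ^ p.2)
      + ∑ p ∈ Finset.HasAntidiagonal.antidiagonal n,
        ((p.1 : ℝ) - 1/2) * (cc p.1 * cc p.2 * (b+2*s) ^ p.1 * (b-2*s) ^ p.2)
      = ((n:ℝ) - 1) * FF b s n := by
    rw [FF, Finset.mul_sum, ← Finset.sum_add_distrib]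
    refine Finset.sum_congr rfl fun p hp => ?_
    have hm : p.1 + p.2 = n := Finset.HasAntidiagonal.mem_antidiagonal.mp hp
    have hm' : (p.1 : ℝ) + (p.2 : ℝ) = (n : ℝ) := by exact_mod_cast congrArg (Nat.cast (R:=ℝ)) hm
    linear_combination (cc p.1 * cc p.2 * (b+2*s) ^ p.1 * (b-2*s) ^ p.2) * hm'
  rw [split, key1, key2]
  rw [Finset.sum_sub_distrib] at step1
  simp only [Finset.sum_neg_distrib] at step1
  rw [t1, t2] at step1
  linear_combination step1 - ((b+2*s)*(b-2*s))*fin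

lemma catalan_rec (k : ℕ) :
    ((k:ℝ) + 2) * (catalan (k+1) : ℝ) = 2 * (2*(k:ℝ) + 1) * (catalan k : ℝ) := by
  have h1 := succ_mul_catalan_eq_centralBinom (k+1)
  have h2 := Nat.succ_mul_centralBinom_succ k
  have h3 := succ_mul_catalan_eq_centralBinom k
  have hk : ((k:ℝ) + 1) ≠ 0 := by positivity
  apply mul_left_cancel₀ hk
  have c1 : ((k:ℝ)+2) * (catalan (k+1) : ℝ) = (Nat.centralBinom (k+1) : ℝ) := by
    exact_mod_cast congrArg (Nat.cast (R:=ℝ)) h1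
  have c2 : ((k:ℝ)+1) * (Nat.centralBinom (k+1) : ℝ) = 2*(2*(k:ℝ)+1) * (Nat.centralBinom k : ℝ) := by
    exact_mod_cast congrArg (Nat.cast (R:=ℝ)) h2
  have c3 : ((k:ℝ)+1) * (catalan k : ℝ) = (Nat.centralBinom k : ℝ) := by
    exact_mod_cast congrArg (Nat.cast (R:=ℝ)) h3
  linear_combination ((k:ℝ)+1) * c1 + c2 - 2*(2*(k:ℝ)+1) * c3

lemma abs_choose (n k : ℕ) :
    (2*(k:ℝ)+1) * (Nat.choose n (2*k+1) : ℝ) + 2*(k:ℝ) * (Nat.choose n (2*k) : ℝ)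
      = (n:ℝ) * (Nat.choose n (2*k) : ℝ) := by
  by_cases h : 2*k ≤ n
  · have := Nat.choose_succ_right_eq n (2*k)
    have c : (Nat.choose n (2*k+1) : ℝ) * (2*(k:ℝ)+1)
        = (Nat.choose n (2*k) : ℝ) * ((n:ℝ) - 2*(k:ℝ)) := by
      have := congrArg (Nat.cast (R:=ℝ)) this
      push_cast [Nat.cast_sub h] at this
      linarith [this]
    linarith [c]
  · push_neg at h
    have h1 : Nat.choose n (2*k) = 0 := Nat.choose_eq_zero_of_lt h
    have h2 : Nat.choose n (2*k+1) = 0 := Nat.choose_eq_zero_of_lt (by omega)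
    simp [h1, h2]

lemma key_binom (n k : ℕ) :
    ((n:ℝ)+4) * (Nat.choose (n+2) (2*k+2) : ℝ) * (catalan (k+1) : ℝ)
      + ((n:ℝ)+1) * (Nat.choose n (2*k+2) : ℝ) * (catalan (k+1) : ℝ)
    = (2*(n:ℝ)+5) * (Nat.choose (n+1) (2*k+2) : ℝ) * (catalan (k+1) : ℝ)
      + 4*((n:ℝ)+1) * (Nat.choose n (2*k) : ℝ) * (catalan k : ℝ) := by
  have h2k : (2*(k:ℝ)+1) ≠ 0 := by positivity
  apply mul_left_cancel₀ h2k
  have p1 : (Nat.choose (n+2) (2*k+2) : ℝ)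
      = (Nat.choose (n+1) (2*k+1) : ℝ) + (Nat.choose (n+1) (2*k+2) : ℝ) := by
    exact_mod_cast congrArg (Nat.cast (R:=ℝ)) (Nat.choose_succ_succ (n+1) (2*k+1))
  have p2 : (Nat.choose (n+1) (2*k+2) : ℝ)
      = (Nat.choose n (2*k+1) : ℝ) + (Nat.choose n (2*k+2) : ℝ) := by
    exact_mod_cast congrArg (Nat.cast (R:=ℝ)) (Nat.choose_succ_succ n (2*k+1))
  have p3 : (Nat.choose (n+1) (2*k+1) : ℝ)
      = (Nat.choose n (2*k) : ℝ) + (Nat.choose n (2*k+1) : ℝ) := by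
    exact_mod_cast congrArg (Nat.cast (R:=ℝ)) (Nat.choose_succ_succ n (2*k))
  have habs := abs_choose n k
  have hcat := catalan_rec k
  linear_combination
    ((2*(k:ℝ)+1)*((n:ℝ)+4)*(catalan (k+1) : ℝ)) * p1
    + ((2*(k:ℝ)+1)*((n:ℝ)+4)*(catalan (k+1) : ℝ)) * p3
    + (-(2*(k:ℝ)+1)*((n:ℝ)+1)*(catalan (k+1) : ℝ)) * p2
    + (3*(catalan (k+1) : ℝ)) * habs
    + (2*((n:ℝ)+1)*(Nat.choose n (2*k) : ℝ)) * hcat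

noncomputable def ww (b s : ℝ) (m j : ℕ) : ℝ :=
  (Nat.choose m (2*j) : ℝ) * (catalan j : ℝ) * (s^2)^(j+1) * b^(m - 2*j)

noncomputable def BB (b s : ℝ) (n : ℕ) : ℕ → ℝ
  | 0 => 0
  | (k+1) => 4*((n:ℝ)+1) * (Nat.choose n (2*k) : ℝ) * (catalan k : ℝ) * (s^2)^(k+2) * b^(n-2*k)

lemma GG_eq_ww (b s : ℝ) (n m : ℕ) (h : n - 2 = m) (h2 : 2 ≤ n) :
    GG b s n = ∑ j ∈ Finset.range n, ww b s m j := by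
  subst h
  rw [GG]
  refine Finset.sum_congr rfl fun j _ => ?_
  rw [ww, Nat.sub_sub]

lemma ww_eq_zero (b s : ℝ) (m j : ℕ) (h : m < 2*j) : ww b s m j = 0 := by
  simp [ww, Nat.choose_eq_zero_of_lt h]

lemma BB_zero (b s : ℝ) (n : ℕ) : BB b s n 0 = 0 := rfl

lemma BB_succ (b s : ℝ) (n k : ℕ) :
    BB b s n (k+1)
      = 4*((n:ℝ)+1) * (Nat.choose n (2*k) : ℝ) * (catalan k : ℝ) * (s^2)^(k+2) * b^(n-2*k) := rfl

lemma BB_shift (b s : ℝ) (n : ℕ) :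
    ∑ j ∈ Finset.range (n+4), BB b s n j
      = ∑ j ∈ Finset.range (n+4), 4*((n:ℝ)+1) * s^2 * ww b s n j := by
  have e1 : ∑ j ∈ Finset.range (n+5), BB b s n j
      = ∑ j ∈ Finset.range (n+4), BB b s n (j+1) + BB b s n 0 :=
    Finset.sum_range_succ' _ _
  have e2 : ∑ j ∈ Finset.range (n+5), BB b s n j
      = ∑ j ∈ Finset.range (n+4), BB b s n j + BB b s n (n+4) :=
    Finset.sum_range_succ _ _
  have e3 : BB b s n (n+4) = 0 := by
    rw [BB_succ, Nat.choose_eq_zero_of_lt (by omega)]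
    simp
  have e4 : ∀ j, BB b s n (j+1) = 4*((n:ℝ)+1) * s^2 * ww b s n j := by
    intro j
    rw [BB_succ, ww, show j+2 = (j+1)+1 from rfl, pow_succ]
    ring
  rw [e2, e3, add_zero] at e1
  rw [e1, BB_zero, add_zero]
  exact Finset.sum_congr rfl fun j _ => e4 j

lemma GG_main_term (b s : ℝ) (n : ℕ) (j : ℕ) :
    ((n:ℝ)+4) * ww b s (n+2) j
      = b*(2*(n:ℝ)+5) * ww b s (n+1) j - ((n:ℝ)+1)*b^2 * ww b s n j + BB b s n j := by
  rcases j with _ | k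
  · rw [BB_zero, ww, ww, ww]
    simp only [Nat.mul_zero, Nat.choose_zero_right, catalan_zero, Nat.sub_zero, Nat.cast_one]
    rw [show n+2 = (n+1)+1 from rfl, pow_succ, pow_succ (n := n)]
    push_cast
    ring
  · rw [BB_succ, ww, ww, ww]
    rcases lt_trichotomy n (2*k+1) with h | h | h
    · rcases Nat.lt_or_ge n (2*k) with h4 | h4
      · have z2 : Nat.choose (n+2) (2*(k+1)) = 0 := Nat.choose_eq_zero_of_lt (by omega)
        have z1 : Nat.choose (n+1) (2*(k+1)) = 0 := Nat.choose_eq_zero_of_lt (by omega)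
        have z0 : Nat.choose n (2*(k+1)) = 0 := Nat.choose_eq_zero_of_lt (by omega)
        have zx : Nat.choose n (2*k) = 0 := Nat.choose_eq_zero_of_lt (by omega)
        rw [z0, z1, z2, zx]; simp
      · -- n = 2*k
        have h3 : n = 2*k := by omega
        subst h3
        have z2 : Nat.choose (2*k+2) (2*(k+1)) = 1 := by
          rw [show 2*(k+1) = 2*k+2 from by ring, Nat.choose_self]
        have z1 : Nat.choose (2*k+1) (2*(k+1)) = 0 := Nat.choose_eq_zero_of_lt (by omega)
        have z0 : Nat.choose (2*k) (2*(k+1)) = 0 := Nat.choose_eq_zero_of_lt (by omega)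
        have zx : Nat.choose (2*k) (2*k) = 1 := Nat.choose_self _
        rw [z0, z1, z2, zx]
        rw [show 2*k+2-2*(k+1) = 0 from by omega, show 2*k-2*(k+1) = 0 from by omega,
          show 2*k-2*k = 0 from by omega]
        have hc := catalan_rec k
        push_cast
        linear_combination (2*(s^2)^(k+2)) * hc
    · -- n = 2*k+1
      subst h
      have z2 : Nat.choose (2*k+1+2) (2*(k+1)) = 2*k+3 := by
        rw [show 2*k+1+2 = (2*k+2)+1 from by ring, show 2*(k+1) = 2*k+2 from by ring,
          Nat.choose_succ_self_right]
      have z1 : Nat.choose (2*k+1+1) (2*(k+1)) = 1 := by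
        rw [show 2*k+1+1 = 2*(k+1) from by ring, Nat.choose_self]
      have z0 : Nat.choose (2*k+1) (2*(k+1)) = 0 := Nat.choose_eq_zero_of_lt (by omega)
      have zx : Nat.choose (2*k+1) (2*k) = 2*k+1 := Nat.choose_succ_self_right _
      rw [z0, z1, z2, zx]
      rw [show 2*k+1+2-2*(k+1) = 1 from by omega, show 2*k+1+1-2*(k+1) = 0 from by omega,
        show 2*k+1-2*(k+1) = 0 from by omega, show 2*k+1-2*k = 1 from by omega]
      have hc := catalan_rec k
      push_cast
      linear_combination (4*((k:ℝ)+1)*(s^2)^(k+2)*b) * hc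
    · -- 2*k+2 ≤ n
      obtain ⟨d, rfl⟩ : ∃ d, n = 2*k+2+d := ⟨n - (2*k+2), by omega⟩
      rw [show 2*k+2+d+2-2*(k+1) = d+2 from by omega, show 2*k+2+d+1-2*(k+1) = d+1 from by omega,
        show 2*k+2+d-2*(k+1) = d from by omega, show 2*k+2+d-2*k = d+2 from by omega]
      have hk := key_binom (2*k+2+d) k
      rw [show (2*(k+1):ℕ) = 2*k+2 from by ring]
      push_cast
      push_cast at hk
      rw [show d+2 = (d+1)+1 from rfl, pow_succ, pow_succ (n := d)]
      linear_combination ((s^2)^(k+2) * b^d * b * b) * hk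

lemma GG_rec (b s : ℝ) (n : ℕ) :
    ((n:ℝ)+4) * GG b s (n+4)
      = b*(2*(n:ℝ)+5) * GG b s (n+3) - (b^2 - 4*s^2)*((n:ℝ)+1) * GG b s (n+2) := by
  have hG4 : GG b s (n+4) = ∑ j ∈ Finset.range (n+4), ww b s (n+2) j :=
    GG_eq_ww b s (n+4) (n+2) (by omega) (by omega)
  have hG3 : GG b s (n+3) = ∑ j ∈ Finset.range (n+4), ww b s (n+1) j := by
    rw [GG_eq_ww b s (n+3) (n+1) (by omega) (by omega)]
    refine Finset.sum_subset (Finset.range_subset_range.2 (by omega)) fun j _ hj => ?_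
    have : j = n+3 := by simp only [Finset.mem_range] at *; omega
    exact ww_eq_zero _ _ _ _ (by omega)
  have hG2 : GG b s (n+2) = ∑ j ∈ Finset.range (n+4), ww b s n j := by
    rw [GG_eq_ww b s (n+2) n (by omega) (by omega)]
    refine Finset.sum_subset (Finset.range_subset_range.2 (by omega)) fun j hj' hj => ?_
    have : n+2 ≤ j := by simpa [Finset.mem_range] using hj
    exact ww_eq_zero _ _ _ _ (by omega)
  have hsum : ∑ j ∈ Finset.range (n+4), ((n:ℝ)+4) * ww b s (n+2) j
      = ∑ j ∈ Finset.range (n+4),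
          (b*(2*(n:ℝ)+5) * ww b s (n+1) j - ((n:ℝ)+1)*b^2 * ww b s n j + BB b s n j) :=
    Finset.sum_congr rfl fun j _ => GG_main_term b s n j
  rw [Finset.sum_add_distrib, Finset.sum_sub_distrib, BB_shift] at hsum
  rw [hG4, hG3, hG2]
  rw [← Finset.mul_sum] at hsum
  calc ((n:ℝ)+4) * ∑ j ∈ Finset.range (n+4), ww b s (n+2) j
      = ∑ j ∈ Finset.range (n+4), b*(2*(n:ℝ)+5) * ww b s (n+1) j
        - ∑ j ∈ Finset.range (n+4), ((n:ℝ)+1)*b^2 * ww b s n j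
        + ∑ j ∈ Finset.range (n+4), 4*((n:ℝ)+1) * s^2 * ww b s n j := hsum
    _ = _ := by
        rw [← Finset.mul_sum, ← Finset.mul_sum, ← Finset.mul_sum]
        ring

lemma FF_eq_GG (b s : ℝ) : ∀ n : ℕ,
    FF b s (n+2) = -2 * GG b s (n+2) ∧ FF b s (n+3) = -2 * GG b s (n+3) := by
  intro n
  induction n with
  | zero =>
    refine ⟨?_, ?_⟩
    · rw [FF_two, GG_two]
    · rw [FF_three, GG_three]; ring
  | succ k ih =>
    refine ⟨ih.2, ?_⟩
    have hF := FF_rec b s (k+2)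
    have hG := GG_rec b s k
    have hne : ((k:ℝ)+4) ≠ 0 := by positivity
    apply mul_left_cancel₀ hne
    have e1 : (k+2)+2 = k+4 := by ring
    have e2 : (k+2)+1 = k+3 := by ring
    rw [e1, e2] at hF
    push_cast at hF hG
    rw [show k+1+3 = k+4 from by ring]
    calc ((k:ℝ)+4) * FF b s (k+4)
        = b * (2*((k:ℝ)+2)+1) * FF b s (k+3)
          - (b+2*s)*(b-2*s)*(((k:ℝ)+2)-1) * FF b s (k+2) := by
          linear_combination hF
      _ = ((k:ℝ)+4) * (-2 * GG b s (k+4)) := by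
          rw [ih.1, ih.2]
          linear_combination (2 : ℝ) * hG

lemma cc_product (k r : ℕ) (U V : ℝ) :
    (Nat.choose (2*k) k : ℝ) * (Nat.choose (2*r) r : ℝ) * U ^ k * V ^ r
        / ((2*(k:ℝ)-1) * (2*(r:ℝ)-1))
      = 4^(k+r) * (cc k * cc r * U ^ k * V ^ r) := by
  have h1 := two_cast_sub_one_ne k
  have h2 := two_cast_sub_one_ne r
  have h3 : (4:ℝ)^k ≠ 0 := by positivity
  have h4 : (4:ℝ)^r ≠ 0 := by positivity
  rw [cc, cc]
  field_simp
  ring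

/-- the gambler's-ruin probability `P_{n,0}` (weighted Motzkin form, LHS) equals
the closed form obtained from a double binomial expansion of the ruin generating function. -/
theorem ruin_probability_closed_form (a b c : ℝ) (ha : 0 < a) (hb : 0 ≤ b) (hc : 0 ≤ c)
    (n : ℕ) (hn : 2 ≤ n) :
    (∑ i ∈ Finset.range ((n - 2) / 2 + 1),
        (Nat.choose (n - 2) (2 * i) : ℝ) * (catalan i : ℝ) *
          a ^ i * b ^ (n - 2 - 2 * i) * c ^ (i + 1))
      = -(1 / 4 : ℝ) ^ n / (2 * a) *
          ∑ r ∈ Finset.range (n + 1),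
            (Nat.choose (2 * (n - r)) (n - r) : ℝ) * (Nat.choose (2 * r) r : ℝ) *
              (b + 2 * Real.sqrt (a * c)) ^ (n - r) * (b - 2 * Real.sqrt (a * c)) ^ r /
                (((2 * ((n : ℤ) - (r : ℤ)) - 1) * (2 * (r : ℤ) - 1) : ℤ) : ℝ) := by
  set s : ℝ := Real.sqrt (a * c) with hs
  have hs2 : s ^ 2 = a * c := Real.sq_sqrt (mul_nonneg ha.le hc)
  have han : a ≠ 0 := ha.ne'
  -- Step A : a * LHS = GG
  have hA : a * (∑ i ∈ Finset.range ((n - 2) / 2 + 1),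
        (Nat.choose (n - 2) (2 * i) : ℝ) * (catalan i : ℝ) *
          a ^ i * b ^ (n - 2 - 2 * i) * c ^ (i + 1)) = GG b s n := by
    have hsub : Finset.range ((n-2)/2+1) ⊆ Finset.range n := Finset.range_subset_range.2 (by omega)
    rw [GG, ← Finset.sum_subset hsub (fun j hj hj' => by
      have h1 : j ∈ Finset.range n := hj
      have h2 : j ∉ Finset.range ((n-2)/2+1) := hj'
      simp only [Finset.mem_range] at h1 h2
      have : n - 2 < 2*j := by omega
      simp [Nat.choose_eq_zero_of_lt this])]
    rw [Finset.mul_sum]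
    refine Finset.sum_congr rfl fun j _ => ?_
    rw [hs2, mul_pow, pow_succ (a := a)]
    ring
  -- Step B : RHS sum = 4^n * FF
  have hB : (∑ r ∈ Finset.range (n + 1),
        (Nat.choose (2 * (n - r)) (n - r) : ℝ) * (Nat.choose (2 * r) r : ℝ) *
          (b + 2 * s) ^ (n - r) * (b - 2 * s) ^ r /
            (((2 * ((n : ℤ) - (r : ℤ)) - 1) * (2 * (r : ℤ) - 1) : ℤ) : ℝ))
      = 4 ^ n * FF b s n := by
    have hrefl : FF b s n = ∑ r ∈ Finset.range (n+1),
        cc (n - r) * cc r * (b + 2*s) ^ (n - r) * (b - 2*s) ^ r := by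
      rw [FF, Finset.Nat.sum_antidiagonal_eq_sum_range_succ_mk]
      rw [← Finset.sum_range_reflect]
      refine Finset.sum_congr rfl fun r hr => ?_
      have hr' : r ≤ n := by simpa [Nat.lt_succ_iff] using Finset.mem_range.mp hr
      simp only [Nat.succ_sub_one, show n+1-1 = n from rfl]
      rw [Nat.sub_sub_self hr']
    rw [hrefl, Finset.mul_sum]
    refine Finset.sum_congr rfl fun r hr => ?_
    have hr' : r ≤ n := by simpa [Nat.lt_succ_iff] using Finset.mem_range.mp hr
    have hcast : (((2 * ((n : ℤ) - (r : ℤ)) - 1) * (2 * (r : ℤ) - 1) : ℤ) : ℝ)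
        = (2*((n-r : ℕ) : ℝ)-1) * (2*(r:ℝ)-1) := by
      push_cast [Nat.cast_sub hr']
      ring
    rw [hcast, cc_product (n-r) r (b+2*s) (b-2*s), show (n-r)+r = n from by omega]
  -- Step C : combine
  obtain ⟨m, rfl⟩ : ∃ m, n = m + 2 := ⟨n - 2, by omega⟩
  have hFG : FF b s (m+2) = -2 * GG b s (m+2) := (FF_eq_GG b s m).1
  have h14 : (1/4:ℝ)^m * 4^m = 1 := by
    rw [← mul_pow]; norm_num
  have hA' : (∑ i ∈ Finset.range ((m + 2 - 2) / 2 + 1),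
        (Nat.choose (m + 2 - 2) (2 * i) : ℝ) * (catalan i : ℝ) *
          a ^ i * b ^ (m + 2 - 2 - 2 * i) * c ^ (i + 1)) = GG b s (m+2) / a := by
    rw [eq_div_iff han]
    linear_combination hA
  rw [hA', hB, hFG, one_div, inv_pow]
  have h4n : (4:ℝ)^(m+2) ≠ 0 := by positivity
  field_simp
end

section
/- Let μ1 ∈ [0, 1) and μ0 = 1 − μ1. Let p : ℕ → ℕ → ℝ satisfy p 1 0 = 1, p 1 m = 0 for all m ≥ 1, and for all k ≥ 2 and m ≥ 0: p k m = ((m−1) + (k−m)·μ1)/(k−1) · p (k−1) (m−1) + ((k−1−m)/(k−1))·μ0 · p (k−1) m, where the first term is taken to be 0 when m = 0. Then for all k ≥ 1 and 0 ≤ m ≤ k−1: p k m = μ0^{k−1} · ∑_{1 ≤ i_1 < i_2 < ⋯ < i_m ≤ k−1} ∏_{j=1}^{m} ((j−1) + i_j·(μ1/μ0)) / (k−j), where the sum ranges over all strictly increasing m-tuples of integers in {1, …, k−1} and for m = 0 the empty sum/product is 1. -/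
open Finset

noncomputable def Tld (r : ℝ) (n m : ℕ) : ℝ :=
  ∑ i ∈ (Fintype.piFinset (fun _ : Fin m => Finset.Icc 1 n)).filter (fun i => StrictMono i),
    ∏ j : Fin m, (((j : ℕ) : ℝ) + (i j : ℝ) * r)

lemma Tld_zero (r : ℝ) (n : ℕ) : Tld r n 0 = 1 := by
  simp [Tld, Subsingleton.strictMono]

lemma Tld_empty (r : ℝ) (n m : ℕ) (h : n < m) : Tld r n m = 0 := by
  rw [Tld]; apply Finset.sum_eq_zero
  intro i hi
  simp only [Finset.mem_filter, Fintype.mem_piFinset] at hi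
  exfalso
  have hc := Finset.card_le_card_of_injOn (s := Finset.univ) i (fun j _ => hi.1 j)
    (hi.2.injective.injOn)
  simp [Nat.card_Icc] at hc
  omega

lemma snoc_sm {m : ℕ} {g : Fin m → ℕ} (hg : StrictMono g) {a : ℕ} (ha : ∀ j, g j < a) :
    StrictMono (Fin.snoc g a : Fin (m+1) → ℕ) := by
  intro x y hxy
  rcases Fin.eq_castSucc_or_eq_last y with ⟨y', rfl⟩ | rfl
  · rcases Fin.eq_castSucc_or_eq_last x with ⟨x', rfl⟩ | rfl
    · simpa [Fin.snoc_castSucc] using hg (Fin.castSucc_lt_castSucc_iff.mp hxy)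
    · simp [Fin.lt_iff_val_lt_val] at hxy; omega
  · rcases Fin.eq_castSucc_or_eq_last x with ⟨x', rfl⟩ | rfl
    · simpa [Fin.snoc_castSucc, Fin.snoc_last] using ha x'
    · exact absurd hxy (lt_irrefl _)

lemma Tld_rec (r : ℝ) (n m : ℕ) (hn : 1 ≤ n) :
    Tld r n (m+1) = ((m:ℝ) + (n:ℝ) * r) * Tld r (n-1) m + Tld r (n-1) (m+1) := by
  rw [Tld, ← Finset.sum_filter_add_sum_filter_not _ (fun i => i (Fin.last m) = n)]
  congr 1
  · rw [Tld, Finset.mul_sum]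
    refine Finset.sum_nbij' (fun i => Fin.init i) (fun g => Fin.snoc g n) ?_ ?_ ?_ ?_ ?_
    · intro i hi
      simp only [Finset.mem_filter, Fintype.mem_piFinset, Finset.mem_Icc] at hi ⊢
      obtain ⟨⟨h1, h2⟩, h3⟩ := hi
      refine ⟨fun j => ?_, h2.comp Fin.strictMono_castSucc⟩
      have hlt : i (Fin.castSucc j) < i (Fin.last m) := h2 (Fin.castSucc_lt_last j)
      have := h1 (Fin.castSucc j)
      unfold Fin.init
      omega
    · intro g hg
      simp only [Finset.mem_filter, Fintype.mem_piFinset, Finset.mem_Icc] at hg ⊢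
      obtain ⟨h1, h2⟩ := hg
      have hlt : ∀ j, g j < n := fun j => by have := h1 j; omega
      refine ⟨⟨fun j => ?_, snoc_sm h2 hlt⟩, by simp⟩
      rcases Fin.eq_castSucc_or_eq_last j with ⟨j', rfl⟩ | rfl
      · simp only [Fin.snoc_castSucc]; have := h1 j'; omega
      · simpa using hn
    · intro i hi
      simp only [Finset.mem_filter] at hi
      have h := Fin.snoc_init_self i
      rw [hi.2] at h
      exact h
    · intro g hg
      exact Fin.init_snoc _ _
    · intro i hi
      simp only [Finset.mem_filter] at hi
      rw [Fin.prod_univ_castSucc, hi.2, Fin.val_last, mul_comm]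
      exact congrArg _ (Finset.prod_congr rfl fun j _ => by rw [Fin.coe_castSucc]; rfl)
  · rw [Tld]
    congr 1
    ext i
    simp only [Finset.mem_filter, Fintype.mem_piFinset, Finset.mem_Icc]
    constructor
    · rintro ⟨⟨h1, h2⟩, h3⟩
      refine ⟨fun j => ?_, h2⟩
      have hle : i j ≤ i (Fin.last m) := h2.monotone (Fin.le_last j)
      have h1j := h1 j
      have h1l := h1 (Fin.last m)
      omega
    · rintro ⟨h1, h2⟩
      refine ⟨⟨fun j => by have := h1 j; omega, h2⟩, ?_⟩
      have := h1 (Fin.last m)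
      omega

noncomputable def Dld (k m : ℕ) : ℝ := ∏ j : Fin m, ((k:ℝ) - (((j:ℕ):ℝ) + 1))

lemma Dld_zero (k : ℕ) : Dld k 0 = 1 := by simp [Dld]

lemma Dld_pos (k m : ℕ) (hk : 1 ≤ k) (h : m ≤ k - 1) : 0 < Dld k m := by
  refine Finset.prod_pos fun j _ => ?_
  have hj : (j:ℕ) + 1 < k := by have := j.isLt; omega
  have : ((j:ℕ):ℝ) + 1 < (k:ℝ) := by exact_mod_cast hj
  linarith

lemma Dld_succ (k m : ℕ) : Dld (k+1) (m+1) = (k:ℝ) * Dld k m := by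
  rw [Dld, Dld, Fin.prod_univ_succ]
  congr 1
  · push_cast [Fin.val_zero]; ring
  · exact Finset.prod_congr rfl fun j _ => by push_cast [Fin.val_succ]; ring

lemma Dld_mul (k m : ℕ) : Dld (k+1) m * ((k:ℝ) - m) = (k:ℝ) * Dld k m := by
  have h1 : Dld (k+1) m * ((k:ℝ) - m) = ∏ j : Fin (m+1), ((k:ℝ) - ((j:ℕ):ℝ)) := by
    rw [Fin.prod_univ_castSucc, Fin.val_last, Dld]
    congr 1
    exact Finset.prod_congr rfl fun j _ => by push_cast [Fin.coe_castSucc]; ring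
  have h2 : (k:ℝ) * Dld k m = ∏ j : Fin (m+1), ((k:ℝ) - ((j:ℕ):ℝ)) := by
    rw [Fin.prod_univ_succ, Fin.val_zero, Dld]
    congr 1
    · norm_num
    · exact Finset.prod_congr rfl fun j _ => by push_cast [Fin.val_succ]; ring
  rw [h1, h2]

lemma sumdiv {ι : Type*} (s : Finset ι) {m : ℕ} (A : ι → Fin m → ℝ) (b : Fin m → ℝ) :
    ∑ i ∈ s, ∏ j, (A i j / b j) = (∑ i ∈ s, ∏ j, A i j) / (∏ j, b j) := by
  rw [Finset.sum_div]
  exact Finset.sum_congr rfl fun i _ => Finset.prod_div_distrib _ _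

/-- the exact Luria–Delbrück distribution indexed by population size.
`p k m` is the probability of `m` mutants among `k` cells; the strictly increasing tuples
`1 ≤ i_1 < … < i_m ≤ k-1` are encoded as strictly monotone functions `Fin m → ℕ` with values
in `Icc 1 (k-1)`. -/
theorem luria_delbruck_exact (μ1 μ0 : ℝ) (hμ1 : 0 ≤ μ1) (hμ1' : μ1 < 1) (hμ0 : μ0 = 1 - μ1)
    (p : ℕ → ℕ → ℝ)
    (hp10 : p 1 0 = 1) (hp1 : ∀ m, 1 ≤ m → p 1 m = 0)
    (hrec : ∀ k, 2 ≤ k → ∀ m,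
      p k m = (if m = 0 then 0 else
            ((((m : ℝ) - 1) + ((k : ℝ) - (m : ℝ)) * μ1) / ((k : ℝ) - 1)) * p (k - 1) (m - 1))
          + ((((k : ℝ) - 1 - (m : ℝ)) / ((k : ℝ) - 1)) * μ0) * p (k - 1) m) :
    ∀ k, 1 ≤ k → ∀ m, m ≤ k - 1 →
      p k m = μ0 ^ (k - 1) *
        ∑ i ∈ (Fintype.piFinset (fun _ : Fin m => Finset.Icc 1 (k - 1))).filter
            (fun i => StrictMono i),
          ∏ j : Fin m,
            (((j : ℕ) : ℝ) + (i j : ℝ) * (μ1 / μ0)) / ((k : ℝ) - (((j : ℕ) : ℝ) + 1)) := by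
  have hμ0pos : 0 < μ0 := by rw [hμ0]; linarith
  have hμ0ne : μ0 ≠ 0 := ne_of_gt hμ0pos
  have hμ1e : μ1 = 1 - μ0 := by rw [hμ0]; ring
  subst hμ1e
  have key : ∀ k, 1 ≤ k → ∀ m, m ≤ k - 1 →
      p k m = μ0 ^ (k - 1) * Tld ((1 - μ0) / μ0) (k - 1) m / Dld k m := by
    intro k
    induction k with
    | zero => omega
    | succ k ih =>
      intro _ m hm
      rcases Nat.eq_zero_or_pos k with rfl | hk1
      · have hm0 : m = 0 := by omega
        subst hm0
        rw [hp10]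
        norm_num [Tld_zero, Dld_zero]
      · have hkR : (k:ℝ) ≠ 0 := Nat.cast_ne_zero.mpr (by omega)
        have hrk := hrec (k+1) (by omega) m
        simp only [Nat.add_sub_cancel] at hrk hm ⊢
        have hpow : μ0 ^ k = μ0 * μ0 ^ (k - 1) := by
          conv_lhs => rw [show k = (k-1)+1 by omega]
          rw [pow_succ]; ring
        match m, hm with
        | 0, _ =>
          rw [hrk, if_pos rfl, ih hk1 0 (by omega), Tld_zero, Tld_zero, Dld_zero, Dld_zero]
          push_cast
          rw [hpow]
          simp only [add_sub_cancel_right]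
          field_simp
          ring
        | s+1, hm =>
          have hs : s ≤ k - 1 := by omega
          have ihs := ih hk1 s hs
          have hD : Dld k s ≠ 0 := ne_of_gt (Dld_pos k s hk1 hs)
          have e1 : Dld (k+1) (s+1) = (k:ℝ) * Dld k s := Dld_succ k s
          rw [hrk, if_neg (Nat.succ_ne_zero s), Nat.add_sub_cancel,
            Tld_rec _ k s hk1, ihs, e1]
          rcases Nat.lt_or_ge (s+1) k with hlt | hge
          · have hs1 : s + 1 ≤ k - 1 := by omega
            have ihs1 := ih hk1 (s+1) hs1
            have e2 : Dld k (s+1) = Dld k s * ((k:ℝ) - ((s:ℝ)+1)) := by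
              have h := Dld_mul k (s+1)
              rw [e1] at h
              push_cast at h
              apply mul_left_cancel₀ hkR
              rw [← h]; ring
            rw [ihs1, e2, hpow]
            have hks : ((k:ℝ) - ((s:ℝ)+1)) ≠ 0 := by
              have : (s:ℝ) + 1 < (k:ℝ) := by exact_mod_cast hlt
              intro h; linarith
            push_cast
            simp only [add_sub_cancel_right]
            field_simp
            ring
          · have hsk : s + 1 = k := by omega
            have hsr : (s:ℝ) + 1 = (k:ℝ) := by exact_mod_cast hsk
            have hT2 : Tld ((1 - μ0) / μ0) (k-1) (s+1) = 0 :=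
              Tld_empty _ (k-1) (s+1) (by omega)
            rw [hT2, hpow]
            push_cast
            rw [show ((k:ℝ) + 1 - 1 - ((s:ℝ) + 1)) = 0 by linarith]
            simp only [add_sub_cancel_right]
            field_simp
            ring
  intro k hk m hm
  rw [key k hk m hm, sumdiv, mul_div_assoc]
  rfl
end

section
/- Let μ1 ∈ [0, 1) and μ0 = 1 − μ1. Let p : ℕ → ℕ → ℝ satisfy p 1 0 = 1, p 1 m = 0 for m ≥ 1, p k m = 0 for m ≥ k, ∑_{m=0}^{k−1} p k m = 1 for all k ≥ 1, and for all k ≥ 2, m ≥ 0: p k m = ((m−1) + (k−m)·μ1)/(k−1) · p (k−1) (m−1) + ((k−1−m)/(k−1))·μ0 · p (k−1) m (first term taken as 0 when m = 0). Define E1 k = ∑_{m=0}^{k−1} m·(p k m) and E2 k = ∑_{m=0}^{k−1} m²·(p k m). Then E1 1 = 0, E2 1 = 0, and for all k ≥ 2: E1 k = μ1 + E1 (k−1)·(1 + μ0/(k−1)) and E2 k = μ1 + E1 (k−1)·(2 − μ0·(2k−3)/(k−1)) + E2 (k−1)·(1 + 2·μ0/(k−1)). -/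
open Finset

/-- the first and second moments of the exact Luria–Delbrück distribution
satisfy the stated recursions. -/
theorem luria_delbruck_moments (μ1 μ0 : ℝ) (hμ1 : 0 ≤ μ1) (hμ1' : μ1 < 1) (hμ0 : μ0 = 1 - μ1)
    (p : ℕ → ℕ → ℝ)
    (hp10 : p 1 0 = 1) (hp1 : ∀ m, 1 ≤ m → p 1 m = 0)
    (hzero : ∀ k m, k ≤ m → p k m = 0)
    (hnorm : ∀ k, 1 ≤ k → ∑ m ∈ Finset.range k, p k m = 1)
    (hrec : ∀ k, 2 ≤ k → ∀ m,
      p k m = (if m = 0 then 0 else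
            ((((m : ℝ) - 1) + ((k : ℝ) - (m : ℝ)) * μ1) / ((k : ℝ) - 1)) * p (k - 1) (m - 1))
          + ((((k : ℝ) - 1 - (m : ℝ)) / ((k : ℝ) - 1)) * μ0) * p (k - 1) m)
    (E1 E2 : ℕ → ℝ)
    (hE1 : ∀ k, E1 k = ∑ m ∈ Finset.range k, (m : ℝ) * p k m)
    (hE2 : ∀ k, E2 k = ∑ m ∈ Finset.range k, (m : ℝ) ^ 2 * p k m) :
    E1 1 = 0 ∧ E2 1 = 0 ∧
      ∀ k, 2 ≤ k →
        E1 k = μ1 + E1 (k - 1) * (1 + μ0 / ((k : ℝ) - 1)) ∧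
        E2 k = μ1 + E1 (k - 1) * (2 - μ0 * (2 * (k : ℝ) - 3) / ((k : ℝ) - 1))
            + E2 (k - 1) * (1 + 2 * μ0 / ((k : ℝ) - 1)) := by
  refine ⟨by simp [hE1], by simp [hE2], ?_⟩
  intro k hk
  obtain ⟨n, rfl⟩ : ∃ n, k = n + 1 := ⟨k - 1, (Nat.succ_pred_eq_of_pos (by omega)).symm⟩
  have hn : 1 ≤ n := by omega
  have hn0 : (n : ℝ) ≠ 0 := Nat.cast_ne_zero.mpr (by omega)
  have hcast : ((n + 1 : ℕ) : ℝ) - 1 = (n : ℝ) := by push_cast; ring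
  have key : ∀ w : ℕ → ℝ, w 0 = 0 →
      ∑ m ∈ Finset.range (n + 1), w m * p (n + 1) m
      = ∑ j ∈ Finset.range n,
          (w (j + 1) * ((((j : ℝ) + 1 - 1) + (((n + 1 : ℕ) : ℝ) - ((j : ℝ) + 1)) * μ1) / (n : ℝ))
            + w j * (((((n + 1 : ℕ) : ℝ) - 1 - (j : ℝ)) / (n : ℝ)) * μ0)) * p n j := by
    intro w hw0
    have h1 : ∑ m ∈ Finset.range (n + 1), w m * p (n + 1) m
        = ∑ m ∈ Finset.range (n + 1),
          (w m * (if m = 0 then 0 else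
              ((((m : ℝ) - 1) + (((n + 1 : ℕ) : ℝ) - (m : ℝ)) * μ1) / ((n : ℝ))) * p n (m - 1))
            + w m * (((((n + 1 : ℕ) : ℝ) - 1 - (m : ℝ)) / ((n : ℝ))) * μ0) * p n m) := by
      refine Finset.sum_congr rfl fun m _ => ?_
      rw [hrec (n + 1) (by omega) m]
      simp only [Nat.add_sub_cancel, hcast]
      ring
    rw [h1, Finset.sum_add_distrib]
    have h2 : ∑ m ∈ Finset.range (n + 1),
        w m * (if m = 0 then 0 else
            ((((m : ℝ) - 1) + (((n + 1 : ℕ) : ℝ) - (m : ℝ)) * μ1) / ((n : ℝ))) * p n (m - 1))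
        = ∑ j ∈ Finset.range n,
            w (j + 1) * ((((j : ℝ) + 1 - 1) + (((n + 1 : ℕ) : ℝ) - ((j : ℝ) + 1)) * μ1) / (n : ℝ))
              * p n j := by
      rw [Finset.sum_range_succ']
      simp only [hw0, zero_mul, add_zero, Nat.succ_ne_zero, if_false, Nat.add_sub_cancel]
      refine Finset.sum_congr rfl fun j _ => ?_
      push_cast
      ring
    have h3 : ∑ m ∈ Finset.range (n + 1),
        w m * (((((n + 1 : ℕ) : ℝ) - 1 - (m : ℝ)) / ((n : ℝ))) * μ0) * p n m
        = ∑ j ∈ Finset.range n,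
            w j * (((((n + 1 : ℕ) : ℝ) - 1 - (j : ℝ)) / (n : ℝ)) * μ0) * p n j := by
      rw [Finset.sum_range_succ, hzero n n le_rfl, mul_zero, add_zero]
    rw [h2, h3, ← Finset.sum_add_distrib]
    refine Finset.sum_congr rfl fun j _ => ?_
    ring
  constructor
  · have k1 := key (fun m => (m : ℝ)) (by simp)
    rw [hE1 (n + 1), Nat.add_sub_cancel, k1]
    have target : μ1 + E1 n * (1 + μ0 / (((n + 1 : ℕ) : ℝ) - 1))
        = μ1 * (∑ j ∈ Finset.range n, p n j)
          + (1 + μ0 / (n : ℝ)) * ∑ j ∈ Finset.range n, (j : ℝ) * p n j := by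
      rw [hnorm n hn, hE1 n, hcast]; ring
    rw [target, Finset.mul_sum, Finset.mul_sum, ← Finset.sum_add_distrib]
    refine Finset.sum_congr rfl fun j _ => ?_
    subst hμ0
    push_cast
    field_simp
    ring
  · have k1 := key (fun m => (m : ℝ) ^ 2) (by simp)
    rw [hE2 (n + 1), Nat.add_sub_cancel, k1]
    have target : μ1 + E1 n * (2 - μ0 * (2 * ((n + 1 : ℕ) : ℝ) - 3) / (((n + 1 : ℕ) : ℝ) - 1))
          + E2 n * (1 + 2 * μ0 / (((n + 1 : ℕ) : ℝ) - 1))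
        = μ1 * (∑ j ∈ Finset.range n, p n j)
          + (2 - μ0 * (2 * ((n + 1 : ℕ) : ℝ) - 3) / (n : ℝ)) * (∑ j ∈ Finset.range n, (j : ℝ) * p n j)
          + (1 + 2 * μ0 / (n : ℝ)) * ∑ j ∈ Finset.range n, (j : ℝ) ^ 2 * p n j := by
      rw [hnorm n hn, hE1 n, hE2 n, hcast]; ring
    rw [target, Finset.mul_sum, Finset.mul_sum, Finset.mul_sum, ← Finset.sum_add_distrib,
      ← Finset.sum_add_distrib]
    refine Finset.sum_congr rfl fun j _ => ?_
    subst hμ0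
    push_cast
    field_simp
    ring
end

section
/- Fix a natural number j ≥ 2. Let q : ℕ → ℕ → ℝ (arguments k and r) satisfy q j 1 = 1, q j r = 0 for r ≠ 1, and for all k > j and r ≥ 1: q k r = q (k−1) r · (1 − r/(k−1)) + q (k−1) (r−1) · ((r−1)/(k−1)), with q (k−1) 0 = 0. Then for all k ≥ j and r ≥ 1: q k r = (j−1) · (k−j)_{r−1} / (k−1)_{r}, where (a)_b = a·(a−1)⋯(a−b+1) denotes the falling factorial (Pochhammer symbol), with (a)_0 = 1. -/
open Finset

/-- closed form for the probability `q k r` that a mutation born in a single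
cell at clone size `j` is present in `r` cells at clone size `k`:
`q k r = (j-1)⬝(k-j)_{r-1}/(k-1)_r` with falling factorials. -/
theorem mutation_cell_count (j : ℕ) (hj : 2 ≤ j) (q : ℕ → ℕ → ℝ)
    (hqj1 : q j 1 = 1) (hqj : ∀ r, r ≠ 1 → q j r = 0)
    (hq0 : ∀ k, q k 0 = 0)
    (hrec : ∀ k, j < k → ∀ r, 1 ≤ r →
      q k r = q (k - 1) r * (1 - (r : ℝ) / ((k : ℝ) - 1))
        + q (k - 1) (r - 1) * (((r : ℝ) - 1) / ((k : ℝ) - 1))) :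
    ∀ k, j ≤ k → ∀ r, 1 ≤ r →
      q k r = ((j : ℝ) - 1) * ((k - j).descFactorial (r - 1) : ℝ)
        / ((k - 1).descFactorial r : ℝ) := by
  intro k hk
  induction k, hk using Nat.le_induction with
  | base =>
    intro r hr
    rcases eq_or_lt_of_le hr with h1 | h2
    · subst h1
      rw [hqj1, Nat.sub_self, Nat.sub_self, Nat.descFactorial_zero,
        Nat.descFactorial_one, Nat.cast_sub (by omega : 1 ≤ j)]
      have hj0 : (j : ℝ) - 1 ≠ 0 := by
        have : (2:ℝ) ≤ (j:ℝ) := by exact_mod_cast hj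
        linarith
      field_simp
      rw [Nat.cast_one, mul_one, div_self hj0]
    · rw [hqj r (by omega)]
      have h0 : (j - j).descFactorial (r - 1) = 0 := by
        rw [Nat.descFactorial_eq_zero_iff_lt]; omega
      rw [h0]; simp
  | succ k hk IH =>
    intro r hr
    have hk2 : 2 ≤ k := by omega
    have hkR : (2:ℝ) ≤ (k:ℝ) := by exact_mod_cast hk2
    have hk0 : (k:ℝ) ≠ 0 := by linarith
    have hrec' := hrec (k+1) (by omega) r hr
    simp only [Nat.add_sub_cancel] at hrec'
    have hc : ((k+1 : ℕ):ℝ) - 1 = (k:ℝ) := by push_cast; ring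
    rw [hc] at hrec'
    rw [Nat.add_sub_cancel]
    rcases eq_or_lt_of_le hr with h1 | hr2
    · -- r = 1
      subst h1
      rw [IH 1 le_rfl] at hrec'
      simp only [Nat.sub_self, Nat.descFactorial_zero, Nat.descFactorial_one] at hrec' ⊢
      rw [hq0] at hrec'
      rw [hrec']
      have hc1 : ((k - 1 : ℕ):ℝ) = (k:ℝ) - 1 := by
        rw [Nat.cast_sub (by omega)]; push_cast; ring
      rw [hc1]
      have hk1 : (k:ℝ) - 1 ≠ 0 := by linarith
      field_simp
      simp
    · -- r ≥ 2
      have hr2' : 2 ≤ r := hr2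
      by_cases hbig : k + 1 ≤ r
      · -- everything is zero
        have hA : (k - j).descFactorial (r - 1) = 0 := by
          rw [Nat.descFactorial_eq_zero_iff_lt]; omega
        have hB : (k - j).descFactorial (r - 1 - 1) = 0 := by
          rw [Nat.descFactorial_eq_zero_iff_lt]; omega
        have hC : (k + 1 - j).descFactorial (r - 1) = 0 := by
          rw [Nat.descFactorial_eq_zero_iff_lt]; omega
        rw [IH r hr, IH (r-1) (by omega), hA, hB] at hrec'
        rw [hrec', hC]
        simp
      · push_neg at hbig
        have hrk : r ≤ k := by omega
        rw [IH r hr, IH (r-1) (by omega)] at hrec'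
        rcases eq_or_lt_of_le hrk with hrk1 | hrk2
        · -- r = k
          subst hrk1
          have hA : (r - j).descFactorial (r - 1) = 0 := by
            rw [Nat.descFactorial_eq_zero_iff_lt]; omega
          have hE : (((r-1).descFactorial (r-1) : ℕ) : ℝ) ≠ 0 := by
            simp only [ne_eq, Nat.cast_eq_zero, Nat.descFactorial_eq_zero_iff_lt]
            omega
          have hF : r.descFactorial r = r * (r-1).descFactorial (r-1) := by
            have h := Nat.succ_descFactorial_succ (r-1) (r-1)
            rw [show (r-1)+1 = r from by omega] at h
            exact h
          have hkey : (r + 1 - j).descFactorial (r - 1)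
              = (r - 1) * (r - j).descFactorial (r - 1 - 1) := by
            rcases eq_or_lt_of_le hj with hj2 | hj3
            · -- j = 2
              subst hj2
              have h := Nat.succ_descFactorial_succ (r-2) (r-1-1)
              rw [show (r-2)+1 = r+1-2 from by omega,
                show (r-1-1)+1 = r-1 from by omega] at h
              rw [h]
              congr 1
            · -- j ≥ 3: both sides zero
              have hz1 : (r + 1 - j).descFactorial (r - 1) = 0 := by
                rw [Nat.descFactorial_eq_zero_iff_lt]; omega
              have hz2 : (r - j).descFactorial (r - 1 - 1) = 0 := by
                rw [Nat.descFactorial_eq_zero_iff_lt]; omega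
              rw [hz1, hz2, mul_zero]
          rw [hA] at hrec'
          rw [hrec', hkey, hF]
          have hc1 : ((r - 1 : ℕ):ℝ) = (r:ℝ) - 1 := by
            rw [Nat.cast_sub (by omega)]
            push_cast; ring
          push_cast [hc1]
          field_simp
          ring
        · -- 2 ≤ r ≤ k - 1
          have hE : (((k-1).descFactorial (r-1) : ℕ) : ℝ) ≠ 0 := by
            simp only [ne_eq, Nat.cast_eq_zero, Nat.descFactorial_eq_zero_iff_lt]
            omega
          have hD : (k-1).descFactorial r = (k - r) * (k-1).descFactorial (r-1) := by
            have h := Nat.descFactorial_succ (k-1) (r-1)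
            rw [show (r-1)+1 = r from by omega] at h
            rw [h]
            congr 1
            omega
          have hF : k.descFactorial r = k * (k-1).descFactorial (r-1) := by
            have h := Nat.succ_descFactorial_succ (k-1) (r-1)
            rw [show (k-1)+1 = k from by omega, show (r-1)+1 = r from by omega] at h
            exact h
          by_cases hb : (k - j).descFactorial (r - 1 - 1) = 0
          · -- then all numerators vanish
            have hblt : k - j < r - 1 - 1 := Nat.descFactorial_eq_zero_iff_lt.mp hb
            have hA : (k - j).descFactorial (r - 1) = 0 := by
              rw [Nat.descFactorial_eq_zero_iff_lt]; omega
            have hC : (k + 1 - j).descFactorial (r - 1) = 0 := by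
              rw [Nat.descFactorial_eq_zero_iff_lt]; omega
            rw [hA, hb] at hrec'
            rw [hrec', hC]
            simp
          · have hble : r - 1 - 1 ≤ k - j := by
              by_contra h
              exact hb (Nat.descFactorial_eq_zero_iff_lt.mpr (by omega))
            have hA : (k - j).descFactorial (r - 1)
                = (k - j - (r - 2)) * (k - j).descFactorial (r - 1 - 1) := by
              have e : r - 2 = r - 1 - 1 := by omega
              rw [e]
              have h := Nat.descFactorial_succ (k-j) (r-1-1)
              rw [show (r-1-1)+1 = r-1 from by omega] at h
              exact h
            have hC : (k + 1 - j).descFactorial (r - 1)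
                = (k + 1 - j) * (k - j).descFactorial (r - 1 - 1) := by
              have h := Nat.succ_descFactorial_succ (k-j) (r-1-1)
              rw [show (k-j)+1 = k+1-j from by omega,
                show (r-1-1)+1 = r-1 from by omega] at h
              exact h
            rw [hA, hD] at hrec'
            rw [hrec', hC, hF]
            have c1 : ((k - r : ℕ):ℝ) = (k:ℝ) - (r:ℝ) := by
              rw [Nat.cast_sub (by omega)]
            have c2 : ((k - j - (r - 2) : ℕ):ℝ) = (k:ℝ) - (j:ℝ) - ((r:ℝ) - 2) := by
              rw [Nat.cast_sub (by omega : r - 2 ≤ k - j), Nat.cast_sub (by omega : j ≤ k),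
                Nat.cast_sub (by omega : 2 ≤ r)]
              push_cast; ring
            have c3 : ((k + 1 - j : ℕ):ℝ) = (k:ℝ) + 1 - (j:ℝ) := by
              rw [Nat.cast_sub (by omega)]; push_cast; ring
            have hkr0 : (k:ℝ) - (r:ℝ) ≠ 0 := by
              have : (r:ℝ) + 1 ≤ (k:ℝ) := by exact_mod_cast hrk2
              linarith
            push_cast [c1, c2, c3]
            field_simp
            ring
end

section
/- Fix natural numbers k ≥ 2 and r with 1 ≤ r ≤ k−1, and fix j ≥ 2. Let q : ℕ → ℕ → ℕ → ℝ satisfy, for each j ≥ 2: q j j 1 = 1, q j j r = 0 for r ≠ 1, and for k > j, r ≥ 1: q j k r = q j (k−1) r · (1 − r/(k−1)) + q j (k−1) (r−1) · ((r−1)/(k−1)) (with q j (k−1) 0 = 0), and set q 1 k r = 0. Then (1/(k−1)) · ∑_{j=1}^{k−r+1} q j k r = ∑_{j=1}^{k−r+1} ((j−1)/(k−1)²) · ∏_{m=1}^{r−1} (1 − (j−2)/(k−m−1)). -/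
open Finset

/-- the probability that a randomly selected mutation is carried by exactly `r`
of the `k` cells: `(1/(k-1)) ∑_{j=1}^{k-r+1} q j k r = ∑_{j=1}^{k-r+1} ((j-1)/(k-1)²)
∏_{m=1}^{r-1} (1 - (j-2)/(k-m-1))`. -/
theorem random_mutation_cell_count (k r : ℕ) (hk : 2 ≤ k) (hr : 1 ≤ r) (hrk : r ≤ k - 1)
    (q : ℕ → ℕ → ℕ → ℝ)
    (hqj1 : ∀ j, 2 ≤ j → q j j 1 = 1)
    (hqj : ∀ j, 2 ≤ j → ∀ r', r' ≠ 1 → q j j r' = 0)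
    (hq0 : ∀ j, 2 ≤ j → ∀ k', q j k' 0 = 0)
    (hrec : ∀ j, 2 ≤ j → ∀ k', j < k' → ∀ r', 1 ≤ r' →
      q j k' r' = q j (k' - 1) r' * (1 - (r' : ℝ) / ((k' : ℝ) - 1))
        + q j (k' - 1) (r' - 1) * (((r' : ℝ) - 1) / ((k' : ℝ) - 1)))
    (hq1 : ∀ k' r', q 1 k' r' = 0) :
    (1 / ((k : ℝ) - 1)) * ∑ j ∈ Finset.Icc 1 (k - r + 1), q j k r
      = ∑ j ∈ Finset.Icc 1 (k - r + 1),
          (((j : ℝ) - 1) / ((k : ℝ) - 1) ^ 2) *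
            ∏ m ∈ Finset.Icc 1 (r - 1), (1 - ((j : ℝ) - 2) / ((k : ℝ) - (m : ℝ) - 1)) := by
  -- q j k r = 0 when r exceeds the maximum possible number of mutant cells
  have hzero : ∀ j, 2 ≤ j → ∀ k', j ≤ k' → ∀ r', k' - j + 1 < r' → q j k' r' = 0 := by
    intro j hj k' hk'
    induction k', hk' using Nat.le_induction with
    | base =>
      intro r' hr'
      exact hqj j hj r' (by omega)
    | succ n hn ih =>
      intro r' hr'
      rw [hrec j hj (n+1) (by omega) r' (by omega)]
      have h1 : n + 1 - 1 = n := by omega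
      rw [h1, ih r' (by omega), ih (r' - 1) (by omega)]
      ring
  -- closed form for q j k r within the valid range
  have hmain : ∀ j, 2 ≤ j → ∀ k', j ≤ k' → ∀ r', 1 ≤ r' → r' ≤ k' - j + 1 →
      q j k' r' = (((j : ℝ) - 1) / ((k' : ℝ) - 1)) *
        ∏ i ∈ Finset.range (r' - 1), (1 - ((j : ℝ) - 2) / ((k' : ℝ) - (i : ℝ) - 2)) := by
    intro j hj k' hk'
    induction k', hk' using Nat.le_induction with
    | base =>
      intro r' h1 h2
      have hr1 : r' = 1 := by omega
      subst hr1
      simp only [Nat.sub_self, Finset.range_zero, Finset.prod_empty]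
      rw [hqj1 j hj]
      have : (j : ℝ) - 1 ≠ 0 := by
        have : (2:ℝ) ≤ (j:ℝ) := by exact_mod_cast hj
        linarith
      field_simp
    | succ n hn ih =>
      intro r' h1 h2
      have hn2 : 2 ≤ n := by omega
      have hnR : (2:ℝ) ≤ (n:ℝ) := by exact_mod_cast hn2
      have hkne : (n : ℝ) ≠ 0 := by positivity
      have hk1ne : (n : ℝ) - 1 ≠ 0 := by linarith
      rw [hrec j hj (n+1) (by omega) r' h1]
      have h1' : n + 1 - 1 = n := by omega
      rw [h1']
      push_cast
      rcases eq_or_lt_of_le h1 with h1e | h1lt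
      · -- r' = 1
        subst h1e
        rw [hq0 j hj n, ih 1 le_rfl (by omega)]
        norm_num
        field_simp
      · -- r' ≥ 2
        obtain ⟨t, rfl⟩ : ∃ t, r' = t + 2 := ⟨r' - 2, by omega⟩
        have e1 : t + 2 - 1 = t + 1 := rfl
        rw [e1]
        push_cast
        have hP : ∏ i ∈ Finset.range (t+1), (1 - ((j:ℝ)-2)/((n:ℝ)+1 - (i:ℝ) - 2))
            = (1 - ((j:ℝ)-2)/((n:ℝ)-1)) *
              ∏ i ∈ Finset.range t, (1 - ((j:ℝ)-2)/((n:ℝ) - (i:ℝ) - 2)) := by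
          rw [Finset.prod_range_succ', mul_comm]
          congr 1
          · ring_nf
          · exact Finset.prod_congr rfl (by intro i _; push_cast; ring_nf)
        have hjt : j ≤ n := by omega
        rcases le_or_gt (t + 2) (n - j + 1) with hA | hB
        · -- within range: use IH twice
          rw [ih (t+2) (by omega) hA, ih (t+1) (by omega) (by omega)]
          have e2 : t + 2 - 1 = t + 1 := rfl
          have e3 : t + 1 - 1 = t := rfl
          rw [e2, e3, hP, Finset.prod_range_succ]
          push_cast
          have hnt : ((n:ℝ)) - (t:ℝ) - 2 ≠ 0 := by
            have : t + 2 < n := by omega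
            have : (t:ℝ) + 2 < (n:ℝ) := by exact_mod_cast this
            intro h; linarith
          field_simp
          rw [add_sub_cancel_right]
          field_simp
          ring
        · -- boundary case r' = n - j + 2
          have hB' : t + 2 = n - j + 2 := by omega
          rw [hzero j hj n hn (t+2) (by omega), ih (t+1) (by omega) (by omega)]
          have e3 : t + 1 - 1 = t := rfl
          rw [e3, hP]
          push_cast
          have key : (t:ℝ) = (n:ℝ) - (j:ℝ) := by
            have : t = n - j := by omega
            subst this
            push_cast [Nat.cast_sub hjt]
            ring
          rw [key]
          field_simp
          ring
  -- now the sum identity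
  rw [Finset.mul_sum]
  refine Finset.sum_congr rfl ?_
  intro j hj'
  simp only [Finset.mem_Icc] at hj'
  by_cases hj1 : j = 1
  · subst hj1
    rw [hq1]
    norm_num
  · have hj2 : 2 ≤ j := by omega
    rw [hmain j hj2 k (by omega) r hr (by omega)]
    rw [show Finset.Icc 1 (r-1) = Finset.Ico 1 r by
        rw [← Finset.Ico_add_one_right_eq_Icc]; congr 1; omega,
      Finset.prod_Ico_eq_prod_range]
    rw [show (∏ i ∈ Finset.range (r-1), (1 - ((j:ℝ)-2)/((k:ℝ) - ((1+i : ℕ):ℝ) - 1)))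
        = ∏ i ∈ Finset.range (r-1), (1 - ((j:ℝ)-2)/((k:ℝ) - (i:ℝ) - 2)) from
      Finset.prod_congr rfl (by intro i _; push_cast; ring_nf)]
    field_simp
end

section
/- Let μ0 ∈ [0, 1]. For natural numbers i ≥ 1, k > i and n ≥ 1, define P(i, k, n) = ∑ over strictly increasing sequences i = i_0 < i_1 < ⋯ < i_{n−1} ≤ k−1 (with i_n := k) of [∏_{j=1}^{n} ∏_{d=i_{j−1}+1}^{i_j − 1} (1 − j·μ0/d)] · [∏_{j=1}^{n−1} (j·μ0 / i_j)]; for n = 1 the sum has the single empty sequence and P(i, k, 1) = ∏_{d=i+1}^{k−1} (1 − μ0/d). Then for all n ≥ 2 and all k ≥ i + 2: P(i, k, n) = P(i, k−1, n) · (1 − n·μ0/(k−1)) + P(i, k−1, n−1) · ((n−1)·μ0/(k−1)), where P(i, k', n') = 0 whenever k' < i + n'. -/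
open Finset

/-- `clonePstat μ0 i k n`: the probability that a clone born as a single cell at the `i`-th cell
division contains exactly `n` cells when the colony has `k` cells.  The strictly increasing
sequences `i = i₀ < i₁ < ⋯ < i_{n-1} ≤ k-1` with `i_n := k` are encoded as strictly monotone
functions `f : Fin (n+1) → ℕ` with `f 0 = i` and `f n = k`. -/
noncomputable def clonePstat (μ0 : ℝ) (i k n : ℕ) : ℝ :=
  ∑ f ∈ (Fintype.piFinset (fun _ : Fin (n + 1) => Finset.range (k + 1))).filter
      (fun f => StrictMono f ∧ f 0 = i ∧ f (Fin.last n) = k),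
    (∏ j ∈ Finset.univ.filter (fun j : Fin (n + 1) => 1 ≤ (j : ℕ)),
        ∏ d ∈ Finset.Icc (f (j - 1) + 1) (f j - 1),
          (1 - ((j : ℕ) : ℝ) * μ0 / (d : ℝ))) *
      (∏ j ∈ Finset.univ.filter (fun j : Fin (n + 1) => 1 ≤ (j : ℕ) ∧ (j : ℕ) ≤ n - 1),
        ((j : ℕ) : ℝ) * μ0 / ((f j : ℕ) : ℝ))

/-- Auxiliary: the weight of a sequence. -/
noncomputable def cloneW (μ0 : ℝ) (n : ℕ) (f : Fin (n + 1) → ℕ) : ℝ :=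
  (∏ j ∈ Finset.univ.filter (fun j : Fin (n + 1) => 1 ≤ (j : ℕ)),
      ∏ d ∈ Finset.Icc (f (j - 1) + 1) (f j - 1),
        (1 - ((j : ℕ) : ℝ) * μ0 / (d : ℝ))) *
    (∏ j ∈ Finset.univ.filter (fun j : Fin (n + 1) => 1 ≤ (j : ℕ) ∧ (j : ℕ) ≤ n - 1),
      ((j : ℕ) : ℝ) * μ0 / ((f j : ℕ) : ℝ))

/-- Auxiliary: the index set of sequences. -/
def cloneSet (i k n : ℕ) : Finset (Fin (n + 1) → ℕ) :=
  (Fintype.piFinset (fun _ : Fin (n + 1) => Finset.range (k + 1))).filter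
    (fun f => StrictMono f ∧ f 0 = i ∧ f (Fin.last n) = k)

lemma clonePstat_eq (μ0 : ℝ) (i k n : ℕ) :
    clonePstat μ0 i k n = ∑ f ∈ cloneSet i k n, cloneW μ0 n f := rfl

lemma fin_sub_one_val {n : ℕ} (j : Fin (n + 1)) (hj : 1 ≤ (j : ℕ)) :
    ((j - 1 : Fin (n + 1)) : ℕ) = (j : ℕ) - 1 := by
  rw [Fin.coe_sub_one, if_neg]
  intro h; subst h; simp at hj

lemma mem_cloneSet_iff {i k n : ℕ} {f : Fin (n + 1) → ℕ} :
    f ∈ cloneSet i k n ↔ (∀ j, f j < k + 1) ∧ StrictMono f ∧ f 0 = i ∧ f (Fin.last n) = k := by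
  simp [cloneSet, Fintype.mem_piFinset, Finset.mem_filter, Finset.mem_range, and_assoc]


lemma strictMono_snoc {n : ℕ} {g : Fin (n + 1) → ℕ} (hg : StrictMono g) {c : ℕ}
    (hc : g (Fin.last n) < c) : StrictMono (Fin.snoc g c : Fin (n + 2) → ℕ) := by
  intro a b hab
  rcases Fin.eq_castSucc_or_eq_last b with ⟨b', rfl⟩ | rfl
  · have ha : a ≠ Fin.last (n + 1) := by
      intro h; subst h
      exact absurd hab (by simp only [Fin.lt_def, Fin.coe_castSucc, Fin.val_last]; omega)
    obtain ⟨a', rfl⟩ := Fin.exists_castSucc_eq.mpr ha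
    simp only [Fin.snoc_castSucc]
    exact hg (Fin.castSucc_lt_castSucc_iff.mp hab)
  · have ha : a ≠ Fin.last (n + 1) := ne_of_lt hab
    obtain ⟨a', rfl⟩ := Fin.exists_castSucc_eq.mpr ha
    simp only [Fin.snoc_castSucc, Fin.snoc_last]
    exact lt_of_le_of_lt (hg.monotone (Fin.le_last a')) hc

lemma cloneW_snoc (μ0 : ℝ) (K m : ℕ) (hm : 1 ≤ m) (hK : 1 ≤ K)
    (f : Fin (m + 2) → ℕ) (hlast : f (Fin.last (m + 1)) = K + 1)
    (hp : f ((Fin.last m).castSucc) = K) :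
    cloneW μ0 (m + 1) f = cloneW μ0 m (Fin.init f) * ((m : ℝ) * μ0 / (K : ℝ)) := by
  have hsub : Fin.last (m + 1) - 1 = (Fin.last m).castSucc := by
    apply Fin.ext
    rw [fin_sub_one_val _ (by simp)]
    simp
  rw [cloneW, cloneW]
  have e1 : (∏ j ∈ Finset.univ.filter (fun j : Fin (m + 1 + 1) => 1 ≤ (j : ℕ)),
        ∏ d ∈ Finset.Icc (f (j - 1) + 1) (f j - 1),
          (1 - ((j : ℕ) : ℝ) * μ0 / (d : ℝ)))
      = ∏ j ∈ Finset.univ.filter (fun j : Fin (m + 1) => 1 ≤ (j : ℕ)),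
        ∏ d ∈ Finset.Icc (Fin.init f (j - 1) + 1) (Fin.init f j - 1),
          (1 - ((j : ℕ) : ℝ) * μ0 / (d : ℝ)) := by
    rw [Finset.prod_filter, Finset.prod_filter, Fin.prod_univ_castSucc]
    rw [if_pos (show 1 ≤ ((Fin.last (m + 1) : Fin (m + 2)) : ℕ) by simp)]
    rw [hsub, hp, hlast]
    rw [show Finset.Icc (K + 1) (K + 1 - 1) = ∅ from Finset.Icc_eq_empty (by omega)]
    rw [Finset.prod_empty, mul_one]
    refine Finset.prod_congr rfl fun j _ => ?_
    by_cases hj : 1 ≤ (j : ℕ)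
    · rw [if_pos (by simpa using hj), if_pos hj]
      have h2 : (Fin.castSucc j) - 1 = Fin.castSucc (j - 1) := by
        apply Fin.ext
        rw [fin_sub_one_val _ (by simpa using hj)]
        rw [Fin.coe_castSucc, Fin.coe_castSucc, fin_sub_one_val _ hj]
      rw [h2]
      simp [Fin.init]
    · rw [if_neg (by simpa using hj), if_neg hj]
  have e2 : (∏ j ∈ Finset.univ.filter
          (fun j : Fin (m + 1 + 1) => 1 ≤ (j : ℕ) ∧ (j : ℕ) ≤ m + 1 - 1),
        ((j : ℕ) : ℝ) * μ0 / ((f j : ℕ) : ℝ))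
      = (∏ j ∈ Finset.univ.filter
            (fun j : Fin (m + 1) => 1 ≤ (j : ℕ) ∧ (j : ℕ) ≤ m - 1),
          ((j : ℕ) : ℝ) * μ0 / ((Fin.init f j : ℕ) : ℝ)) * ((m : ℝ) * μ0 / (K : ℝ)) := by
    rw [Finset.prod_filter, Finset.prod_filter, Fin.prod_univ_castSucc,
      Fin.prod_univ_castSucc, Fin.prod_univ_castSucc]
    rw [if_neg (show ¬(1 ≤ ((Fin.last (m + 1) : Fin (m + 2)) : ℕ) ∧
        ((Fin.last (m + 1) : Fin (m + 2)) : ℕ) ≤ m + 1 - 1) by simp)]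
    rw [if_pos (show 1 ≤ (((Fin.last m).castSucc : Fin (m + 2)) : ℕ) ∧
        (((Fin.last m).castSucc : Fin (m + 2)) : ℕ) ≤ m + 1 - 1 by simp; omega)]
    rw [if_neg (show ¬(1 ≤ ((Fin.last m : Fin (m + 1)) : ℕ) ∧
        ((Fin.last m : Fin (m + 1)) : ℕ) ≤ m - 1) by simp; omega)]
    rw [hp, mul_one, mul_one]
    have : (((Fin.last m).castSucc : Fin (m + 2)) : ℕ) = m := by simp
    rw [this]
    congr 1
    refine Finset.prod_congr rfl fun j _ => ?_
    have hjlt : (j : ℕ) < m := j.isLt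
    have hcond : (1 ≤ ((j.castSucc.castSucc : Fin (m + 2)) : ℕ) ∧
        ((j.castSucc.castSucc : Fin (m + 2)) : ℕ) ≤ m + 1 - 1)
        ↔ (1 ≤ ((j.castSucc : Fin (m + 1)) : ℕ) ∧
        ((j.castSucc : Fin (m + 1)) : ℕ) ≤ m - 1) := by
      simp; omega
    rw [if_congr hcond rfl rfl]
    by_cases hj : 1 ≤ ((j.castSucc : Fin (m + 1)) : ℕ) ∧
        ((j.castSucc : Fin (m + 1)) : ℕ) ≤ m - 1
    · rw [if_pos hj, if_pos hj]
      simp [Fin.init]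
    · rw [if_neg hj, if_neg hj]
  rw [e1, e2]
  ring

theorem partB (μ0 : ℝ) (i K m : ℕ) (hm : 1 ≤ m) (hK : 1 ≤ K) :
    ∑ f ∈ (cloneSet i (K + 1) (m + 1)).filter
        (fun f => f ((Fin.last m).castSucc) = K), cloneW μ0 (m + 1) f
      = (∑ g ∈ cloneSet i K m, cloneW μ0 m g) * ((m : ℝ) * μ0 / (K : ℝ)) := by
  rw [Finset.sum_mul]
  refine Finset.sum_nbij' (fun f => Fin.init f) (fun g => Fin.snoc g (K + 1))
    ?_ ?_ ?_ ?_ ?_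
  · intro f hf
    rw [Finset.mem_filter] at hf
    obtain ⟨hf1, hp⟩ := hf
    rw [mem_cloneSet_iff] at hf1 ⊢
    obtain ⟨hrange, hmono, h0, hlastv⟩ := hf1
    refine ⟨?_, hmono.comp Fin.strictMono_castSucc, ?_, ?_⟩
    · intro j
      have h3 : f j.castSucc ≤ f ((Fin.last m).castSucc) :=
        hmono.monotone (by simpa using Fin.le_last j)
      simp only [Fin.init]
      omega
    · simp only [Fin.init, Fin.castSucc_zero]
      exact h0
    · simp only [Fin.init]
      exact hp
  · intro g hg
    rw [mem_cloneSet_iff] at hg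
    obtain ⟨hrange, hmono, h0, hlastv⟩ := hg
    rw [Finset.mem_filter, mem_cloneSet_iff]
    have hmono' : StrictMono (Fin.snoc g (K + 1) : Fin (m + 2) → ℕ) :=
      strictMono_snoc hmono (by omega)
    refine ⟨⟨?_, hmono', ?_, ?_⟩, ?_⟩
    · intro j
      rcases Fin.eq_castSucc_or_eq_last j with ⟨j', rfl⟩ | rfl
      · have := hrange j'
        simp only [Fin.snoc_castSucc]
        omega
      · simp [Fin.snoc_last]
    · show (Fin.snoc g (K + 1) : Fin (m + 2) → ℕ) 0 = i
      rw [show (0 : Fin (m + 2)) = Fin.castSucc 0 by simp]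
      rw [Fin.snoc_castSucc]
      exact h0
    · simp [Fin.snoc_last]
    · show (Fin.snoc g (K + 1) : Fin (m + 2) → ℕ) ((Fin.last m).castSucc) = K
      rw [Fin.snoc_castSucc]
      exact hlastv
  · intro f hf
    rw [Finset.mem_filter, mem_cloneSet_iff] at hf
    have h4 := hf.1.2.2.2
    rw [show K + 1 = f (Fin.last (m + 1)) from h4.symm]
    exact Fin.snoc_init_self f
  · intro g hg
    exact Fin.init_snoc _ _
  · intro f hf
    rw [Finset.mem_filter, mem_cloneSet_iff] at hf
    exact cloneW_snoc μ0 K m hm hK f hf.1.2.2.2 hf.2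


lemma cloneW_update (μ0 : ℝ) (K m : ℕ) (hm : 1 ≤ m) (hK : 1 ≤ K)
    (f : Fin (m + 2) → ℕ) (hmono : StrictMono f) (hlast : f (Fin.last (m + 1)) = K + 1)
    (hp : f ((Fin.last m).castSucc) < K) :
    cloneW μ0 (m + 1) f
      = cloneW μ0 (m + 1) (Function.update f (Fin.last (m + 1)) K)
          * (1 - (((m + 1 : ℕ)) : ℝ) * μ0 / (K : ℝ)) := by
  have hsub : Fin.last (m + 1) - 1 = (Fin.last m).castSucc := by
    apply Fin.ext
    rw [fin_sub_one_val _ (by simp)]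
    simp
  have hne : ((Fin.last m).castSucc : Fin (m + 2)) ≠ Fin.last (m + 1) :=
    (Fin.castSucc_lt_last _).ne
  rw [cloneW, cloneW]
  have hA : (∏ j : Fin (m + 1), if 1 ≤ ((j.castSucc : Fin (m + 2)) : ℕ) then
        ∏ d ∈ Finset.Icc (f (j.castSucc - 1) + 1) (f j.castSucc - 1),
          (1 - ((j.castSucc : ℕ) : ℝ) * μ0 / (d : ℝ)) else 1)
      = ∏ j : Fin (m + 1), if 1 ≤ ((j.castSucc : Fin (m + 2)) : ℕ) then
        ∏ d ∈ Finset.Icc ((Function.update f (Fin.last (m + 1)) K) (j.castSucc - 1) + 1)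
            ((Function.update f (Fin.last (m + 1)) K) j.castSucc - 1),
          (1 - ((j.castSucc : ℕ) : ℝ) * μ0 / (d : ℝ)) else 1 := by
    refine Finset.prod_congr rfl fun j _ => ?_
    by_cases hj : 1 ≤ ((j.castSucc : Fin (m + 2)) : ℕ)
    · rw [if_pos hj, if_pos hj]
      have h5 : j.castSucc - 1 ≠ Fin.last (m + 1) := by
        intro h
        have h6 := fin_sub_one_val (j.castSucc : Fin (m + 2)) hj
        rw [h] at h6
        simp only [Fin.val_last, Fin.coe_castSucc] at h6
        have := j.isLt
        omega
      have h6 : (j.castSucc : Fin (m + 2)) ≠ Fin.last (m + 1) :=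
        (Fin.castSucc_lt_last _).ne
      rw [Function.update_of_ne h5, Function.update_of_ne h6]
    · rw [if_neg hj, if_neg hj]
  have e1 : (∏ j ∈ Finset.univ.filter (fun j : Fin (m + 1 + 1) => 1 ≤ (j : ℕ)),
        ∏ d ∈ Finset.Icc (f (j - 1) + 1) (f j - 1),
          (1 - ((j : ℕ) : ℝ) * μ0 / (d : ℝ)))
      = (∏ j ∈ Finset.univ.filter (fun j : Fin (m + 1 + 1) => 1 ≤ (j : ℕ)),
        ∏ d ∈ Finset.Icc ((Function.update f (Fin.last (m + 1)) K) (j - 1) + 1)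
            ((Function.update f (Fin.last (m + 1)) K) j - 1),
          (1 - ((j : ℕ) : ℝ) * μ0 / (d : ℝ))) * (1 - (((m + 1 : ℕ)) : ℝ) * μ0 / (K : ℝ)) := by
    have hpos : 1 ≤ ((Fin.last (m + 1) : Fin (m + 2)) : ℕ) := by simp
    rw [Finset.prod_filter, Finset.prod_filter]
    conv_lhs => rw [Fin.prod_univ_castSucc]
    conv_rhs => rw [Fin.prod_univ_castSucc]
    rw [if_pos hpos, if_pos hpos, hsub, Function.update_of_ne hne, Function.update_self,
      hlast, Nat.add_sub_cancel]
    have hins : Finset.Icc (f ((Fin.last m).castSucc) + 1) K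
        = insert K (Finset.Icc (f ((Fin.last m).castSucc) + 1) (K - 1)) := by
      ext x
      simp only [Finset.mem_Icc, Finset.mem_insert]
      omega
    rw [hins, Finset.prod_insert (by simp only [Finset.mem_Icc]; omega), Fin.val_last, hA]
    ring
  have e2 : (∏ j ∈ Finset.univ.filter
          (fun j : Fin (m + 1 + 1) => 1 ≤ (j : ℕ) ∧ (j : ℕ) ≤ m + 1 - 1),
        ((j : ℕ) : ℝ) * μ0 / ((f j : ℕ) : ℝ))
      = ∏ j ∈ Finset.univ.filter
          (fun j : Fin (m + 1 + 1) => 1 ≤ (j : ℕ) ∧ (j : ℕ) ≤ m + 1 - 1),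
        ((j : ℕ) : ℝ) * μ0 / (((Function.update f (Fin.last (m + 1)) K) j : ℕ) : ℝ) := by
    refine Finset.prod_congr rfl fun j hj => ?_
    rw [Finset.mem_filter] at hj
    have hjne : j ≠ Fin.last (m + 1) := by
      intro h
      subst h
      simp only [Fin.val_last] at hj
      omega
    rw [Function.update_of_ne hjne]
  rw [e1, e2]
  ring

theorem partA (μ0 : ℝ) (i K m : ℕ) (hm : 1 ≤ m) (hK : 1 ≤ K) :
    ∑ f ∈ (cloneSet i (K + 1) (m + 1)).filter
        (fun f => ¬ f ((Fin.last m).castSucc) = K), cloneW μ0 (m + 1) f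
      = (∑ g ∈ cloneSet i K (m + 1), cloneW μ0 (m + 1) g)
          * (1 - ((m : ℝ) + 1) * μ0 / (K : ℝ)) := by
  have hcast : (1 - (((m + 1 : ℕ)) : ℝ) * μ0 / (K : ℝ)) = (1 - ((m : ℝ) + 1) * μ0 / (K : ℝ)) := by
    push_cast
    ring
  rw [Finset.sum_mul, ← hcast]
  refine Finset.sum_nbij' (fun f => Function.update f (Fin.last (m + 1)) K)
    (fun g => Function.update g (Fin.last (m + 1)) (K + 1)) ?_ ?_ ?_ ?_ ?_
  · intro f hf
    beta_reduce
    rw [Finset.mem_filter] at hf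
    obtain ⟨hf1, hpne⟩ := hf
    rw [mem_cloneSet_iff] at hf1 ⊢
    obtain ⟨hrange, hmono, h0, hlastv⟩ := hf1
    have hplt : f ((Fin.last m).castSucc) < K + 1 := by
      rw [← hlastv]
      exact hmono (Fin.castSucc_lt_last _)
    have hpK : f ((Fin.last m).castSucc) < K := by omega
    refine ⟨?_, ?_, ?_, ?_⟩
    · intro j
      rcases eq_or_ne j (Fin.last (m + 1)) with rfl | hj
      · rw [Function.update_self]
        omega
      · rw [Function.update_of_ne hj]
        have : j < Fin.last (m + 1) := lt_of_le_of_ne (Fin.le_last j) hj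
        have := hmono this
        omega
    · intro a b hab
      rcases eq_or_ne b (Fin.last (m + 1)) with rfl | hbne
      · have habne : a ≠ Fin.last (m + 1) := ne_of_lt hab
        rw [Function.update_of_ne habne, Function.update_self]
        have h7 : a ≤ (Fin.last m).castSucc := by
          rw [Fin.lt_def] at hab
          rw [Fin.le_def]
          simp only [Fin.val_last, Fin.coe_castSucc] at hab ⊢
          omega
        exact lt_of_le_of_lt (hmono.monotone h7) hpK
      · have habne : a ≠ Fin.last (m + 1) := by
          intro h
          subst h
          exact absurd (lt_of_lt_of_le hab (Fin.le_last b)) (lt_irrefl _)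
        rw [Function.update_of_ne habne, Function.update_of_ne hbne]
        exact hmono hab
    · rw [Function.update_of_ne (by simp [Fin.ext_iff] : (0 : Fin (m + 2)) ≠ Fin.last (m + 1))]
      exact h0
    · rw [Function.update_self]
  · intro g hg
    beta_reduce
    rw [mem_cloneSet_iff] at hg
    obtain ⟨hrange, hmono, h0, hlastv⟩ := hg
    rw [Finset.mem_filter, mem_cloneSet_iff]
    have hp2 : g ((Fin.last m).castSucc) < K := by
      rw [← hlastv]
      exact hmono (Fin.castSucc_lt_last _)
    refine ⟨⟨?_, ?_, ?_, ?_⟩, ?_⟩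
    · intro j
      rcases eq_or_ne j (Fin.last (m + 1)) with rfl | hj
      · rw [Function.update_self]
        omega
      · rw [Function.update_of_ne hj]
        have := hrange j
        omega
    · intro a b hab
      rcases eq_or_ne b (Fin.last (m + 1)) with rfl | hbne
      · have habne : a ≠ Fin.last (m + 1) := ne_of_lt hab
        rw [Function.update_of_ne habne, Function.update_self]
        have h8 : g a ≤ g (Fin.last (m + 1)) := hmono.monotone (Fin.le_last a)
        omega
      · have habne : a ≠ Fin.last (m + 1) := by
          intro h
          subst h
          exact absurd (lt_of_lt_of_le hab (Fin.le_last b)) (lt_irrefl _)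
        rw [Function.update_of_ne habne, Function.update_of_ne hbne]
        exact hmono hab
    · rw [Function.update_of_ne (by simp [Fin.ext_iff] : (0 : Fin (m + 2)) ≠ Fin.last (m + 1))]
      exact h0
    · rw [Function.update_self]
    · rw [Function.update_of_ne ((Fin.castSucc_lt_last _).ne)]
      omega
  · intro f hf
    beta_reduce
    rw [Finset.mem_filter, mem_cloneSet_iff] at hf
    rw [Function.update_idem, show K + 1 = f (Fin.last (m + 1)) from hf.1.2.2.2.symm,
      Function.update_eq_self]
  · intro g hg
    beta_reduce
    rw [mem_cloneSet_iff] at hg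
    rw [Function.update_idem, show K = g (Fin.last (m + 1)) from hg.2.2.2.symm,
      Function.update_eq_self]
  · intro f hf
    beta_reduce
    rw [Finset.mem_filter, mem_cloneSet_iff] at hf
    obtain ⟨⟨hrange, hmono, h0, hlastv⟩, hpne⟩ := hf
    have hplt : f ((Fin.last m).castSucc) < K + 1 := by
      rw [← hlastv]
      exact hmono (Fin.castSucc_lt_last _)
    exact cloneW_update μ0 K m hm hK f hmono hlastv (by omega)

/-- the clone-size probabilities satisfy the recurrence
`P(i,k,n) = P(i,k-1,n)(1 - nμ0/(k-1)) + P(i,k-1,n-1)((n-1)μ0/(k-1))`. -/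
theorem clone_size_recurrence (μ0 : ℝ) (hμ0 : 0 ≤ μ0) (hμ0' : μ0 ≤ 1)
    (i : ℕ) (hi : 1 ≤ i) :
    ∀ n, 2 ≤ n → ∀ k, i + 2 ≤ k →
      clonePstat μ0 i k n
        = clonePstat μ0 i (k - 1) n * (1 - (n : ℝ) * μ0 / ((k : ℝ) - 1))
          + clonePstat μ0 i (k - 1) (n - 1) * (((n : ℝ) - 1) * μ0 / ((k : ℝ) - 1)) := by
  intro n hn k hk
  obtain ⟨m, rfl⟩ : ∃ m, n = m + 1 := ⟨n - 1, by omega⟩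
  obtain ⟨K, rfl⟩ : ∃ K, k = K + 1 := ⟨k - 1, by omega⟩
  have hm : 1 ≤ m := by omega
  have hK : 1 ≤ K := by omega
  have hKR : ((K + 1 : ℕ) : ℝ) - 1 = (K : ℝ) := by push_cast; ring
  rw [clonePstat_eq μ0 i (K + 1) (m + 1)]
  rw [← Finset.sum_filter_add_sum_filter_not (cloneSet i (K + 1) (m + 1))
    (fun f => f ((Fin.last m).castSucc) = K)]
  rw [partB μ0 i K m hm hK, partA μ0 i K m hm hK]
  simp only [Nat.add_sub_cancel, hKR]
  rw [clonePstat_eq μ0 i K (m + 1), clonePstat_eq μ0 i K m]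
  push_cast
  ring
end

section
/- Let a, b, c be nonnegative reals with a + b + c = 1 and a > 0. For n ≥ 1 define u_n = ∑_{x=0}^{⌊(n−1)/2⌋} n!/(x!·(x+1)!·(n−2x−1)!) · a^x · b^{n−2x−1} · c^{x+1}, and u_0 = 0. Then for every real t with 0 < t and t·(b + 2·√(a·c)) < 1, the series ∑_{n=0}^∞ u_n·t^n converges (HasSum) to (1/(2·a·t)) · ((1 − 4·a·c·t²/(1 − b·t)²)^{−1/2} − 1). -/
open Finset

section aux
-- (assume previous lemmas; re-imported by symlink later)

lemma descPoch_smeval_succ (x : ℝ) (k : ℕ) :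
    (descPochhammer ℤ (k+1)).smeval x = (descPochhammer ℤ k).smeval x * (x - k) := by
  rw [descPochhammer_succ_right, Polynomial.smeval_mul]
  simp [Polynomial.smeval_sub, Polynomial.smeval_natCast]

lemma descPoch_neg_half (k : ℕ) :
    (descPochhammer ℤ k).smeval (-(1/2) : ℝ) =
      (-(1/4) : ℝ)^k * (Nat.centralBinom k) * (Nat.factorial k) := by
  induction k with
  | zero => simp
  | succ k ih =>
    rw [descPoch_smeval_succ, ih]
    have h' : ((k:ℝ)+1) * (Nat.centralBinom (k+1)) = 2*(2*(k:ℝ)+1) * Nat.centralBinom k := by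
      exact_mod_cast Nat.succ_mul_centralBinom_succ k
    push_cast [Nat.factorial_succ, pow_succ]
    linear_combination ((-(1/4):ℝ))^k * (1/4) * (Nat.factorial k) * h'

lemma descPoch_neg_one (k : ℕ) :
    (descPochhammer ℤ k).smeval (-1 : ℝ) = (-1 : ℝ)^k * (Nat.factorial k) := by
  induction k with
  | zero => simp
  | succ k ih =>
    rw [descPoch_smeval_succ, ih]
    push_cast [Nat.factorial_succ, pow_succ]
    ring

lemma sum_centralBinom_conv (n : ℕ) :
    ∑ ij ∈ Finset.HasAntidiagonal.antidiagonal n, ((Nat.centralBinom ij.1 : ℝ) * Nat.centralBinom ij.2)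
      = 4 ^ n := by
  have h := Ring.descPochhammer_smeval_add (R := ℝ) (r := -(1/2)) (s := -(1/2)) n (Commute.all _ _)
  rw [show (-(1/2) : ℝ) + (-(1/2)) = -1 by norm_num, descPoch_neg_one] at h
  -- h : (-1)^n * n! = ∑ ij, choose n ij.1 * (P(i) * P(j))
  have h2 : ∀ ij ∈ Finset.HasAntidiagonal.antidiagonal n,
      ((n.choose ij.1 : ℝ)) * ((descPochhammer ℤ ij.1).smeval (-(1/2):ℝ) *
        (descPochhammer ℤ ij.2).smeval (-(1/2):ℝ))
      = (-(1/4))^n * (n.factorial : ℝ) *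
        ((Nat.centralBinom ij.1 : ℝ) * Nat.centralBinom ij.2) := by
    intro ij hij
    obtain ⟨i, j⟩ := ij
    simp only [Finset.HasAntidiagonal.mem_antidiagonal] at hij
    rw [descPoch_neg_half, descPoch_neg_half]
    have hfac : (n.choose i : ℝ) * i.factorial * j.factorial = n.factorial := by
      exact_mod_cast congrArg (Nat.cast : ℕ → ℝ)
        (by rw [← hij, ← Nat.add_sub_cancel_left (n := i) (m := j)] at *
            simpa [hij] using Nat.choose_mul_factorial_mul_factorial
              (Nat.le.intro hij) )
    have hpow : ((-(1/4):ℝ))^i * ((-(1/4):ℝ))^j = (-(1/4))^n := by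
      rw [← pow_add, hij]
    rw [← hfac, ← hpow]; ring
  rw [Finset.sum_congr rfl h2, ← Finset.mul_sum] at h
  have hne : ((-(1/4):ℝ))^n * (n.factorial : ℝ) ≠ 0 := by positivity
  field_simp at h
  have h4 : ((-(1/4):ℝ))^n * 4^n = (-1)^n := by rw [← mul_pow]; norm_num
  have hne' : ((-(1/4):ℝ))^n ≠ 0 := pow_ne_zero _ (by norm_num)
  exact mul_left_cancel₀ hne' (h.symm.trans h4.symm)

lemma centralBinom_le_four_pow (n : ℕ) : Nat.centralBinom n ≤ 4 ^ n := by
  have h : (2*n).choose n ≤ ∑ m ∈ Finset.range (2*n+1), (2*n).choose m :=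
    Finset.single_le_sum (fun i _ => Nat.zero_le _) (by simp [Nat.lt_succ_iff]; omega)
  calc Nat.centralBinom n = (2*n).choose n := rfl
    _ ≤ 2 ^ (2*n) := by rw [← Nat.sum_range_choose]; exact h
    _ = 4 ^ n := by rw [pow_mul]; norm_num

lemma hasSum_centralBinom {y : ℝ} (hy0 : 0 ≤ y) (hy : 4 * y < 1) :
    HasSum (fun n : ℕ => (Nat.centralBinom n : ℝ) * y ^ n)
      ((1 - 4 * y) ^ (-(1:ℝ)/2)) := by
  set f : ℕ → ℝ := fun n => (Nat.centralBinom n : ℝ) * y ^ n with hf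
  have hf0 : ∀ n, 0 ≤ f n := fun n => by positivity
  have h4y : 0 ≤ 4 * y := by positivity
  have hgeo : Summable (fun n : ℕ => (4*y) ^ n) :=
    summable_geometric_of_lt_one h4y hy
  have hsum : Summable f := by
    apply Summable.of_nonneg_of_le hf0 _ hgeo
    intro n
    rw [hf]
    calc (Nat.centralBinom n : ℝ) * y ^ n ≤ 4 ^ n * y ^ n := by
          apply mul_le_mul_of_nonneg_right _ (by positivity)
          exact_mod_cast centralBinom_le_four_pow n
      _ = (4*y) ^ n := by rw [mul_pow]
  have hnorm : Summable (fun n => ‖f n‖) := by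
    simpa [Real.norm_eq_abs, abs_of_nonneg (hf0 _)] using hsum
  have hcauchy : (∑' n, f n) * (∑' n, f n)
      = ∑' n, ∑ ij ∈ Finset.HasAntidiagonal.antidiagonal n, f ij.1 * f ij.2 :=
    tsum_mul_tsum_eq_tsum_sum_antidiagonal_of_summable_norm hnorm hnorm
  have hinner : ∀ n : ℕ, ∑ ij ∈ Finset.HasAntidiagonal.antidiagonal n, f ij.1 * f ij.2 = (4*y) ^ n := by
    intro n
    have : ∀ ij ∈ Finset.HasAntidiagonal.antidiagonal n, f ij.1 * f ij.2
        = ((Nat.centralBinom ij.1 : ℝ) * Nat.centralBinom ij.2) * y ^ n := by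
      intro ij hij
      obtain ⟨i, j⟩ := ij
      simp only [Finset.HasAntidiagonal.mem_antidiagonal] at hij
      rw [hf]
      simp only
      rw [← hij, pow_add]; ring
    rw [Finset.sum_congr rfl this, ← Finset.sum_mul, sum_centralBinom_conv, mul_pow]
  simp only [hinner] at hcauchy
  rw [tsum_geometric_of_lt_one h4y hy] at hcauchy
  have h14 : (0:ℝ) < 1 - 4 * y := by linarith
  have hL0 : 0 ≤ ∑' n, f n := tsum_nonneg hf0
  have hR0 : 0 ≤ (1 - 4 * y) ^ (-(1:ℝ)/2) := Real.rpow_nonneg h14.le _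
  have hR2 : (1 - 4*y) ^ (-(1:ℝ)/2) * (1 - 4*y) ^ (-(1:ℝ)/2) = (1 - 4*y)⁻¹ := by
    rw [← Real.rpow_add h14]
    norm_num
    rw [Real.rpow_neg_one]
  have hLR : (∑' n, f n) = (1 - 4 * y) ^ (-(1:ℝ)/2) := by
    have := congrArg Real.sqrt (hcauchy.trans hR2.symm)
    rwa [Real.sqrt_mul_self hL0, Real.sqrt_mul_self hR0] at this
  rw [← hLR]
  exact hsum.hasSum
lemma cb_succ_eq (x : ℕ) : Nat.centralBinom (x+1) = 2 * ((2*x+1).choose x) := by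
  have h2 : (2*x+1).choose (x+1) = (2*x+1).choose x := by
    rw [← Nat.choose_symm (show x+1 ≤ 2*x+1 by omega)]; congr 1; omega
  have h1 : Nat.centralBinom (x+1) = (2*x+1+1).choose (x+1) := by
    rw [Nat.centralBinom_eq_two_mul_choose]; congr 1
  rw [h1, Nat.choose_succ_succ (2*x+1) x, Nat.succ_eq_add_one, h2]
  omega
end aux

/-- the generating function of `u_n`, the probability that an unrestricted
`(a,b,c)`-random walk started at height `1` is at height `0` after `n` steps. -/
theorem unrestricted_walk_from_one_gf (a b c : ℝ)
    (ha : 0 ≤ a) (hb : 0 ≤ b) (hc : 0 ≤ c) (habc : a + b + c = 1) (ha' : 0 < a)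
    (u : ℕ → ℝ) (hu0 : u 0 = 0)
    (hu : ∀ n, 1 ≤ n → u n = ∑ x ∈ Finset.range ((n - 1) / 2 + 1),
      (n.factorial : ℝ) / ((x.factorial : ℝ) * ((x + 1).factorial : ℝ) *
          ((n - 2 * x - 1).factorial : ℝ)) *
        a ^ x * b ^ (n - 2 * x - 1) * c ^ (x + 1))
    (t : ℝ) (ht : 0 < t) (ht1 : t * (b + 2 * Real.sqrt (a * c)) < 1) :
    HasSum (fun n : ℕ => u n * t ^ n)
      ((1 / (2 * a * t)) *
        ((1 - 4 * a * c * t ^ 2 / (1 - b * t) ^ 2) ^ (-(1 : ℝ) / 2) - 1)) := by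
  have hac : 0 ≤ a * c := mul_nonneg ha hc
  have hsq0 : 0 ≤ 2 * Real.sqrt (a*c) * t := by positivity
  have hbt0 : 0 ≤ b * t := mul_nonneg hb ht.le
  have hbt1 : b * t < 1 := by nlinarith [Real.sqrt_nonneg (a*c)]
  set d : ℝ := 1 - b * t with hd
  have hd0 : 0 < d := by rw [hd]; linarith
  have hs : 2 * Real.sqrt (a*c) * t < d := by rw [hd]; nlinarith
  have h4 : 4 * (a*c) * t^2 < d^2 := by
    have h1 : (2 * Real.sqrt (a*c) * t)^2 < d^2 := by
      nlinarith
    calc 4*(a*c)*t^2 = (2*Real.sqrt (a*c)*t)^2 := by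
          rw [mul_pow, mul_pow, Real.sq_sqrt hac]; ring
      _ < d^2 := h1
  set y : ℝ := a*c*t^2/d^2 with hy
  have hy0 : 0 ≤ y := by positivity
  have hy4 : 4*y < 1 := by
    have h : 4*y = 4*(a*c)*t^2/d^2 := by rw [hy]; ring
    rw [h, div_lt_one (by positivity)]; exact h4
  -- rewrite the target value
  have htarget : 1 - 4 * a * c * t ^ 2 / (1 - b * t) ^ 2 = 1 - 4 * y := by
    rw [hy, ← hd]; ring
  rw [htarget]
  set S : ℝ := (1 / (2 * a * t)) * ((1 - 4*y) ^ (-(1:ℝ)/2) - 1) with hS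
  -- Step D + shift
  have hD : HasSum (fun n : ℕ => (Nat.centralBinom n : ℝ) * y ^ n)
      ((1 - 4*y) ^ (-(1:ℝ)/2)) := hasSum_centralBinom hy0 hy4
  have hD1 : HasSum (fun x : ℕ => (Nat.centralBinom (x+1) : ℝ) * y ^ (x+1))
      ((1 - 4*y) ^ (-(1:ℝ)/2) - 1) := by
    refine (hasSum_nat_add_iff (f := fun n => (Nat.centralBinom n : ℝ) * y^n) 1).mpr ?_
    convert hD using 1
    · rfl
    simp
  -- Step 2
  set g : ℕ → ℝ := fun x => (((2*x+1).choose x : ℝ) * a^x * c^(x+1) * t^(2*x+1)) *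
      (1/(1-b*t)^(2*x+1+1)) with hg_def
  have hg : HasSum g S := by
    have h := hD1.mul_left (1/(2*a*t))
    rw [← hS] at h
    convert h using 2 with x
    · rfl
    rw [hg_def]
    have hcb : (Nat.centralBinom (x+1) : ℝ) = 2 * ((2*x+1).choose x) := by
      exact_mod_cast cb_succ_eq x
    simp only
    rw [hcb, hy, ← hd, div_pow, ← pow_mul]
    have hdne : d ≠ 0 := ne_of_gt hd0
    field_simp
    ring
  -- Step 1 : fiber sums
  set F : ℕ × ℕ → ℝ := fun p =>
    ((2*p.1+1+p.2).factorial : ℝ) / ((p.1.factorial : ℝ) * ((p.1 + 1).factorial : ℝ) *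
          (p.2.factorial : ℝ)) * a ^ p.1 * b ^ p.2 * c ^ (p.1 + 1) * t ^ (2*p.1+1+p.2)
    with hF_def
  have hfiber : ∀ x : ℕ, HasSum (fun m => F (x, m)) (g x) := by
    intro x
    have hr : ‖b*t‖ < 1 := by rw [Real.norm_eq_abs, abs_of_nonneg hbt0]; exact hbt1
    have h := (hasSum_choose_mul_geometric_of_norm_lt_one (2*x+1) hr).mul_left
      (((2*x+1).choose x : ℝ) * a^x * c^(x+1) * t^(2*x+1))
    convert h using 2 with m
    · rfl
    rw [hF_def]
    simp only
    -- term equality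
    have h1 : ((m + (2*x+1)).choose (2*x+1)) * (2*x+1).factorial * m.factorial
        = (2*x+1+m).factorial := by
      have := Nat.choose_mul_factorial_mul_factorial (show 2*x+1 ≤ m + (2*x+1) by omega)
      rw [show m + (2*x+1) - (2*x+1) = m by omega] at this
      rw [this]; congr 1; omega
    have h2 : ((2*x+1).choose x) * x.factorial * (x+1).factorial = (2*x+1).factorial := by
      have := Nat.choose_mul_factorial_mul_factorial (show x ≤ 2*x+1 by omega)
      rw [show 2*x+1 - x = x+1 by omega] at this
      exact this
    have hfx : (x.factorial : ℝ) ≠ 0 := by exact_mod_cast x.factorial_ne_zero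
    have hfx1 : ((x+1).factorial : ℝ) ≠ 0 := by exact_mod_cast (x+1).factorial_ne_zero
    have hfm : (m.factorial : ℝ) ≠ 0 := by exact_mod_cast m.factorial_ne_zero
    have h1' : (((m + (2*x+1)).choose (2*x+1)) : ℝ) * (2*x+1).factorial * m.factorial
        = ((2*x+1+m).factorial : ℝ) := by exact_mod_cast h1
    have h2' : (((2*x+1).choose x) : ℝ) * x.factorial * (x+1).factorial
        = ((2*x+1).factorial : ℝ) := by exact_mod_cast h2
    rw [← h1', ← h2']
    field_simp
    rw [mul_pow, pow_add]
    ring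
  -- Step 3 : HasSum over the product
  have hF0 : ∀ p, 0 ≤ F p := by
    intro p
    rw [hF_def]
    have : (0:ℝ) ≤ ((2*p.1+1+p.2).factorial : ℝ) / ((p.1.factorial : ℝ) *
        ((p.1 + 1).factorial : ℝ) * (p.2.factorial : ℝ)) := by positivity
    positivity
  have hFsummable : Summable F := by
    rw [summable_prod_of_nonneg hF0]
    constructor
    · exact fun x => (hfiber x).summable
    · have : (fun x => ∑' m, F (x, m)) = g := by
        funext x; exact (hfiber x).tsum_eq
      rw [this]
      exact hg.summable
  have hFsum : HasSum F S := by
    have h := hFsummable.hasSum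
    have htsum : ∑' p, F p = S := by
      rw [Summable.tsum_prod' hFsummable (fun x => (hfiber x).summable)]
      rw [show (fun x => ∑' m, F (x, m)) = g from funext fun x => (hfiber x).tsum_eq]
      exact hg.tsum_eq
    rwa [htsum] at h
  -- Step 4 : transfer to ℕ
  set H : ℕ × ℕ → ℝ := fun q =>
    if 2*q.2+1 ≤ q.1 then
      ((q.1.factorial : ℝ) / ((q.2.factorial : ℝ) * ((q.2 + 1).factorial : ℝ) *
          ((q.1 - 2 * q.2 - 1).factorial : ℝ)) *
        a ^ q.2 * b ^ (q.1 - 2 * q.2 - 1) * c ^ (q.2 + 1)) * t ^ q.1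
    else 0 with hH_def
  have hHsum : HasSum H S := by
    have hinj : Function.Injective (fun p : ℕ × ℕ => (2*p.1+1+p.2, p.1)) := by
      intro p q hpq
      simp only [Prod.mk.injEq] at hpq
      obtain ⟨h1, h2⟩ := hpq
      exact Prod.ext h2 (by omega)
    have hzero : ∀ q ∉ Set.range (fun p : ℕ × ℕ => (2*p.1+1+p.2, p.1)), H q = 0 := by
      rintro ⟨n, x⟩ hq
      rw [hH_def]
      simp only
      rw [if_neg]
      intro hle
      refine hq ⟨(x, n - 2*x - 1), ?_⟩
      show (2*x+1+(n-2*x-1), x) = (n, x)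
      simp only [Prod.mk.injEq]
      exact ⟨by omega, trivial⟩
    have hcomp : (H ∘ (fun p : ℕ × ℕ => (2*p.1+1+p.2, p.1))) = F := by
      funext p
      rw [Function.comp_apply, hH_def, hF_def]
      simp only
      rw [if_pos (by omega)]
      rw [show 2*p.1+1+p.2 - 2*p.1 - 1 = p.2 by omega]
    rw [← Function.Injective.hasSum_iff hinj hzero, hcomp]
    exact hFsum
  -- fiberwise over first coordinate
  refine HasSum.prod_fiberwise hHsum ?_
  intro n
  rcases Nat.eq_zero_or_pos n with hn | hn
  · subst hn
    have : ∀ x : ℕ, H (0, x) = 0 := by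
      intro x
      rw [hH_def]
      simp only
      rw [if_neg (by omega)]
    simp only [this]
    simpa [hu0] using hasSum_zero
  · have hfin : ∀ x ∉ Finset.range ((n-1)/2 + 1), H (n, x) = 0 := by
      intro x hx
      simp only [Finset.mem_range] at hx
      rw [hH_def]
      simp only
      rw [if_neg (by omega)]
    have : HasSum (fun x => H (n, x)) (∑ x ∈ Finset.range ((n-1)/2 + 1), H (n, x)) :=
      hasSum_sum_of_ne_finset_zero hfin
    convert this using 1
    rw [hu n hn, Finset.sum_mul]
    refine Finset.sum_congr rfl ?_
    intro x hx
    simp only [Finset.mem_range] at hx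
    rw [hH_def]
    simp only
    rw [if_pos (by omega)]
end
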